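/- arXiv:2207.07775 — 5 statements merged into one kernel-verified Lean document; each statement's English description precedes it below -/
import Mathlib

section
/- Let H be a connected graph with t vertices and chromatic number k ≥ 2. Then for every n ≥ t, m(H,n) ≤ (k−1)^{1−t}·(n)_t. Indeed, the Turán coloring of E(K_n) with k−1 parts has exactly (k−1−s)·(⌊n/(k−1)⌋)_t + s·(⌈n/(k−1)⌉)_t monochromatic labeled copies of H, where s is the remainder of n upon division by k−1, and this quantity is at most (k−1)^{1−t}·(n)_t. -/
open Filter

/-- Labeled copies of `F` in coloring `χ` with all edges of color `col`, image in `S`. -/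
noncomputable def colorCopiesIn {α : Type*} [Fintype α] (F : SimpleGraph α)
    {n c : ℕ} (χ : Sym2 (Fin n) → Fin c) (col : Fin c) (S : Set (Fin n)) : ℕ :=
  Set.ncard {f : α → Fin n | Function.Injective f ∧ (∀ v, f v ∈ S) ∧
    ∀ v w, F.Adj v w → χ s(f v, f w) = col}

noncomputable def colorCopies {α : Type*} [Fintype α] (F : SimpleGraph α)
    {n c : ℕ} (χ : Sym2 (Fin n) → Fin c) (col : Fin c) : ℕ :=
  colorCopiesIn F χ col Set.univ

/-- Monochromatic labeled copies of `F` in `χ`. -/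
noncomputable def monoCopies {α : Type*} [Fintype α] (F : SimpleGraph α)
    {n c : ℕ} (χ : Sym2 (Fin n) → Fin c) : ℕ :=
  Set.ncard {f : α → Fin n | Function.Injective f ∧
    ∃ col : Fin c, ∀ v w, F.Adj v w → χ s(f v, f w) = col}

/-- Minimum number of monochromatic labeled copies of `F` over all `c`-colorings of `E(K_n)`. -/
noncomputable def minMono {α : Type*} [Fintype α] (F : SimpleGraph α) (n c : ℕ) : ℕ :=
  ⨅ χ : Sym2 (Fin n) → Fin c, monoCopies F χ

/-- Degree of `v` in color `col`. -/
noncomputable def colorDeg {n c : ℕ} (χ : Sym2 (Fin n) → Fin c) (col : Fin c) (v : Fin n) : ℕ :=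
  Set.ncard {w : Fin n | w ≠ v ∧ χ s(v, w) = col}

/-- `H` is `k`-critical. -/
def IsKCritical {α : Type*} (H : SimpleGraph α) (k : ℕ) : Prop :=
  H.chromaticNumber = (k : ℕ∞) ∧
    ∃ e ∈ H.edgeSet, (H.deleteEdges {e}).chromaticNumber = ((k - 1 : ℕ) : ℕ∞)

/-- Every vertex outside `s` is a pendant vertex whose unique neighbor lies in `s`. -/
def PendantOutside {α : Type*} (H : SimpleGraph α) (s : Finset α) : Prop :=
  ∀ v ∉ s, ∃ w ∈ s, H.neighborSet v = {w}

/-- The Turán coloring of `E(K_n)` with `k-1` parts: edges within parts red (`0`),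
edges between parts blue (`1`). -/
def turanColoring (n k : ℕ) : Sym2 (Fin n) → Fin 2 :=
  Sym2.lift ⟨fun i j => if i.val % (k - 1) = j.val % (k - 1) then 0 else 1,
    fun i j => by
      dsimp only
      by_cases h : i.val % (k - 1) = j.val % (k - 1)
      · rw [if_pos h, if_pos h.symm]
      · rw [if_neg h, if_neg fun h' => h h'.symm]⟩

lemma ncard_inj_maps {α : Type*} [Fintype α] {n : ℕ} (S : Set (Fin n)) :
    ({f : α → Fin n | Function.Injective f ∧ ∀ v, f v ∈ S}).ncard =
      S.ncard.descFactorial (Fintype.card α) := by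
  classical
  have e : {f : α → Fin n | Function.Injective f ∧ ∀ v, f v ∈ S} ≃ (α ↪ ↥S) :=
    { toFun := fun fm => ⟨fun a => ⟨fm.1 a, fm.2.2 a⟩,
        fun a b hab => fm.2.1 (congrArg Subtype.val hab)⟩
      invFun := fun g => ⟨fun a => (g a).1,
        fun a b hab => g.injective (Subtype.ext hab), fun v => (g v).2⟩
      left_inv := fun fm => rfl
      right_inv := fun g => rfl }
  rw [← Nat.card_coe_set_eq, Nat.card_congr e, Nat.card_eq_fintype_card,
    Fintype.card_embedding_eq, ← Nat.card_eq_fintype_card, Nat.card_coe_set_eq]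

lemma ncard_iUnion_fin {β : Type*} [Fintype β] {q : ℕ} (S : Fin q → Set β)
    (hd : ∀ r r', r ≠ r' → Disjoint (S r) (S r')) :
    (⋃ r, S r).ncard = ∑ r, (S r).ncard := by
  classical
  have h1 : ⋃ r, S r = ↑(Finset.univ.biUnion fun r => (S r).toFinset) := by
    ext x; simp
  rw [h1, Set.ncard_coe_finset, Finset.card_biUnion (by
    intro x _ y _ hxy
    show Disjoint (S x).toFinset (S y).toFinset
    rw [Finset.disjoint_left]
    intro a ha ha'
    simp only [Set.mem_toFinset] at ha ha'
    exact Set.disjoint_left.mp (hd x y hxy) ha ha')]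
  exact Finset.sum_congr rfl fun r _ => (Set.ncard_eq_toFinset_card' _).symm

lemma count_mod (q n r : ℕ) (hq : 0 < q) (hr : r < q) :
    ((Finset.range n).filter (fun i => i % q = r)).card
      = n / q + if r < n % q then 1 else 0 := by
  set m := n / q with hm
  set s0 := n % q with hs0
  have hnm : q * m + s0 = n := Nat.div_add_mod n q
  have hs0q : s0 < q := Nat.mod_lt _ hq
  set c := m + if r < s0 then 1 else 0 with hc
  rw [← Finset.card_range c]
  apply Finset.card_bij' (fun a _ => a / q) (fun b _ => q * b + r)
  · intro a ha
    simp only [Finset.mem_filter, Finset.mem_range] at ha ⊢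
    obtain ⟨han, har⟩ := ha
    have hda : q * (a / q) + r = a := by rw [← har]; exact Nat.div_add_mod a q
    by_cases h : r < s0
    · simp only [hc, if_pos h]
      have : q * (a / q) < q * (m + 1) := by
        have : q * (m + 1) = q * m + q := by ring
        omega
      exact Nat.lt_of_mul_lt_mul_left this
    · simp only [hc, if_neg h]
      have : q * (a / q) < q * m := by omega
      exact Nat.lt_of_mul_lt_mul_left this
  · intro b hb
    simp only [Finset.mem_range] at hb
    simp only [Finset.mem_filter, Finset.mem_range]
    constructor
    · by_cases h : r < s0
      · rw [hc, if_pos h] at hb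
        have : q * b ≤ q * m := Nat.mul_le_mul_left q (by omega)
        omega
      · rw [hc, if_neg h] at hb
        have hb1 : b + 1 ≤ m := hb
        have : q * (b + 1) ≤ q * m := Nat.mul_le_mul_left q hb1
        have h2 : q * (b + 1) = q * b + q := by ring
        omega
    · rw [Nat.mul_add_mod, Nat.mod_eq_of_lt hr]
  · intro a ha
    simp only [Finset.mem_filter, Finset.mem_range] at ha
    have := Nat.div_add_mod a q
    omega
  · intro b hb
    rw [Nat.mul_add_div hq, Nat.div_eq_of_lt hr]
    omega

lemma inner_desc (q : ℕ) (hq : 1 ≤ q) : ∀ (u b m : ℕ), q * b ≤ m →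
    q ^ u * b.descFactorial u ≤ m.descFactorial u := by
  intro u
  induction u with
  | zero => simp
  | succ u ih =>
    intro b m h
    rw [Nat.descFactorial_succ, Nat.descFactorial_succ, pow_succ]
    have key : q * (b - u) ≤ m - u := by
      have h1 : q * (b - u) + q * u = q * (max b u) := by
        rw [← Nat.mul_add]
        congr 1
        omega
      have h2 : u ≤ q * u := Nat.le_mul_of_pos_left u hq
      rcases le_or_gt b u with hbu | hbu
      · have : b - u = 0 := by omega
        simp [this]
      · have h3 : q * (max b u) = q * b := by rw [max_eq_left (le_of_lt hbu)]
        omega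
    calc q ^ u * q * ((b - u) * b.descFactorial u)
        = (q * (b - u)) * (q ^ u * b.descFactorial u) := by ring
      _ ≤ (m - u) * m.descFactorial u :=
          Nat.mul_le_mul key (ih b m h)

lemma per_class (q u n a : ℕ) (hq : 1 ≤ q) (hn : 1 ≤ n) (ha : q * a ≤ n + q - 1) :
    q ^ u * a.descFactorial (u + 1) ≤ a * (n - 1).descFactorial u := by
  rcases Nat.eq_zero_or_pos a with rfl | hapos
  · simp
  · have h1 : a.descFactorial (u + 1) = a * (a - 1).descFactorial u := by
      conv_lhs => rw [show a = (a - 1) + 1 by omega]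
      rw [Nat.succ_descFactorial_succ]
      congr 1
      omega
    rw [h1]
    have h2 : q * (a - 1) ≤ n - 1 := by
      have : q * (a - 1) + q = q * a := by rw [← Nat.mul_succ]; congr 1; omega
      omega
    calc q ^ u * (a * (a - 1).descFactorial u)
        = a * (q ^ u * (a - 1).descFactorial u) := by ring
      _ ≤ a * (n - 1).descFactorial u :=
          Nat.mul_le_mul_left a (inner_desc q hq u _ _ h2)

lemma ceil_div_val (q n : ℕ) (hq : 0 < q) (hs : 0 < n % q) :
    (n + q - 1) / q = n / q + 1 := by
  have h := Nat.div_add_mod n q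
  have hlt : n % q < q := Nat.mod_lt _ hq
  have h2 : q * (n / q + 1) = q * (n / q) + q := Nat.mul_succ q (n / q)
  have h3 : n + q - 1 = q * (n / q + 1) + (n % q - 1) := by omega
  rw [h3, Nat.mul_add_div hq, Nat.div_eq_of_lt (show n % q - 1 < q by omega)]

lemma ceil_div_val0 (q n : ℕ) (hq : 0 < q) (hs : n % q = 0) :
    (n + q - 1) / q = n / q := by
  have h := Nat.div_add_mod n q
  have h2 : q * (n / q) = n := by omega
  have h3 : n + q - 1 = q * (n / q) + (q - 1) := by omega
  rw [h3, Nat.mul_add_div hq, Nat.div_eq_of_lt (show q - 1 < q by omega), Nat.add_zero]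

lemma desc_sum_le (q t n : ℕ) (hq : 0 < q) (hn : 1 ≤ n) (ht : 1 ≤ t) :
    q ^ (t - 1) * ((q - n % q) * ((n / q).descFactorial t)
      + (n % q) * (((n + q - 1) / q).descFactorial t)) ≤ n.descFactorial t := by
  obtain ⟨u, rfl⟩ : ∃ u, t = u + 1 := ⟨t - 1, by omega⟩
  set m := n / q with hm
  set s := n % q with hs
  set m1 := (n + q - 1) / q with hm1
  have hnm : q * m + s = n := Nat.div_add_mod n q
  have hsq : s < q := Nat.mod_lt _ hq
  have hqm : q * m ≤ n := by omega
  have hqm1 : q * m1 ≤ n + q - 1 := by rw [hm1]; exact Nat.mul_div_le (n + q - 1) q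
  have hrhs : n.descFactorial (u + 1) = n * (n - 1).descFactorial u := by
    conv_lhs => rw [show n = (n - 1) + 1 by omega]
    rw [Nat.succ_descFactorial_succ]
    congr 1
    omega
  have p1 : q ^ u * m.descFactorial (u + 1) ≤ m * (n - 1).descFactorial u :=
    per_class q u n m hq hn (by omega)
  have p2 : q ^ u * m1.descFactorial (u + 1) ≤ m1 * (n - 1).descFactorial u :=
    per_class q u n m1 hq hn hqm1
  have hsum : (q - s) * m + s * m1 = n := by
    rcases Nat.eq_zero_or_pos s with hs0 | hs0
    · have : m1 = m := by rw [hm1, hm]; exact ceil_div_val0 q n hq hs0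
      rw [hs0]
      have h1 : (q - 0) * m = q * m := by rw [Nat.sub_zero]
      omega
    · have hval : m1 = m + 1 := by rw [hm1, hm]; exact ceil_div_val q n hq hs0
      rw [hval]
      have h1 : (q - s) * m = q * m - s * m := Nat.sub_mul q s m
      have h2 : s * (m + 1) = s * m + s := by ring
      have h3 : s * m ≤ q * m := Nat.mul_le_mul_right m (le_of_lt hsq)
      omega
  calc q ^ (u + 1 - 1) * ((q - s) * m.descFactorial (u + 1) + s * m1.descFactorial (u + 1))
      = (q - s) * (q ^ u * m.descFactorial (u + 1))
        + s * (q ^ u * m1.descFactorial (u + 1)) := by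
        simp only [Nat.add_sub_cancel]; ring
    _ ≤ (q - s) * (m * (n - 1).descFactorial u) + s * (m1 * (n - 1).descFactorial u) :=
        Nat.add_le_add (Nat.mul_le_mul_left _ p1) (Nat.mul_le_mul_left _ p2)
    _ = ((q - s) * m + s * m1) * (n - 1).descFactorial u := by ring
    _ = n.descFactorial (u + 1) := by rw [hsum, hrhs]

theorem statement2 (k t : ℕ) (hk : 2 ≤ k) (H : SimpleGraph (Fin t))
    (hconn : H.Connected) (hchrom : H.chromaticNumber = (k : ℕ∞))
    (n : ℕ) (hn : t ≤ n) :
    (minMono H n 2 : ℝ) ≤ ((k : ℝ) - 1) ^ ((1 : ℤ) - (t : ℤ)) * (n.descFactorial t : ℝ) ∧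
    monoCopies H (turanColoring n k) =
      (k - 1 - n % (k - 1)) * ((n / (k - 1)).descFactorial t)
        + (n % (k - 1)) * (((n + (k - 1) - 1) / (k - 1)).descFactorial t) ∧
    (((k - 1 - n % (k - 1)) * ((n / (k - 1)).descFactorial t)
        + (n % (k - 1)) * (((n + (k - 1) - 1) / (k - 1)).descFactorial t) : ℕ) : ℝ) ≤
      ((k : ℝ) - 1) ^ ((1 : ℤ) - (t : ℤ)) * (n.descFactorial t : ℝ) := by
  classical
  obtain ⟨v0⟩ := hconn.nonempty
  have ht : 0 < t := v0.pos
  have hnpos : 0 < n := by omega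
  set q := k - 1 with hqdef
  have hq : 0 < q := by omega
  have hcolor : ∀ i j : Fin n, turanColoring n k s(i, j)
      = if i.val % q = j.val % q then 0 else 1 := by
    intro i j
    simp [turanColoring, hqdef]
  -- reachability spreads residues
  have hreach : ∀ (f : Fin t → Fin n),
      (∀ v w, H.Adj v w → (f v).val % q = (f w).val % q) →
      ∀ v w : Fin t, (f v).val % q = (f w).val % q := by
    intro f hf v w
    obtain ⟨p⟩ := hconn.preconnected v w
    induction p with
    | nil => rfl
    | cons h p ih => exact (hf _ _ h).trans ih
  -- no all-blue copies
  have hnotblue : ∀ (f : Fin t → Fin n),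
      (∀ v w, H.Adj v w → ¬ ((f v).val % q = (f w).val % q)) → False := by
    intro f hf
    have hcb : H.Colorable q :=
      ⟨SimpleGraph.Coloring.mk (fun v => (⟨(f v).val % q, Nat.mod_lt _ hq⟩ : Fin q))
        (by
          intro v w hadj hEq
          exact hf v w hadj (congrArg Fin.val hEq))⟩
    have hle := hcb.chromaticNumber_le
    rw [hchrom] at hle
    have hkq : k ≤ q := by exact_mod_cast hle
    omega
  -- the union decomposition
  have hM : {f : Fin t → Fin n | Function.Injective f ∧
      ∃ col : Fin 2, ∀ v w, H.Adj v w → turanColoring n k s(f v, f w) = col}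
      = ⋃ r : Fin q, {f : Fin t → Fin n | Function.Injective f ∧
          ∀ v, f v ∈ {i : Fin n | i.val % q = r.val}} := by
    ext f
    simp only [Set.mem_setOf_eq, Set.mem_iUnion]
    constructor
    · rintro ⟨hinj, col, hcol⟩
      fin_cases col
      · have hsame : ∀ v w, H.Adj v w → (f v).val % q = (f w).val % q := by
          intro v w hadj
          have hc := hcol v w hadj
          rw [hcolor] at hc
          by_contra hne
          rw [if_neg hne] at hc
          exact absurd hc (by decide)
        exact ⟨⟨(f v0).val % q, Nat.mod_lt _ hq⟩, hinj,
          fun v => hreach f hsame v v0⟩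
      · exfalso
        apply hnotblue f
        intro v w hadj hEq
        have hc := hcol v w hadj
        rw [hcolor, if_pos hEq] at hc
        exact absurd hc (by decide)
    · rintro ⟨r, hinj, hmem⟩
      exact ⟨hinj, 0, fun v w hadj => by
        rw [hcolor, if_pos ((hmem v).trans (hmem w).symm)]⟩
  -- disjointness
  have hdisj : ∀ r r' : Fin q, r ≠ r' →
      Disjoint {f : Fin t → Fin n | Function.Injective f ∧
          ∀ v, f v ∈ {i : Fin n | i.val % q = r.val}}
        {f : Fin t → Fin n | Function.Injective f ∧
          ∀ v, f v ∈ {i : Fin n | i.val % q = r'.val}} := by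
    intro r r' hne
    rw [Set.disjoint_left]
    rintro f ⟨_, h1⟩ ⟨_, h2⟩
    exact hne (Fin.ext ((h1 v0).symm.trans (h2 v0)))
  -- the count
  have hclass : ∀ r : Fin q, ({i : Fin n | i.val % q = r.val}).ncard
      = n / q + if r.val < n % q then 1 else 0 := by
    intro r
    rw [Set.ncard_eq_toFinset_card', Set.toFinset_setOf]
    rw [show (Finset.univ.filter fun i : Fin n => i.val % q = r.val).card
        = ((Finset.range n).filter fun i => i % q = r.val).card from by
      rw [Finset.card_filter, Finset.card_filter]
      exact Fin.sum_univ_eq_sum_range (fun i => if i % q = r.val then 1 else 0) n]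
    exact count_mod q n r.val hq r.isLt
  have hcount : monoCopies H (turanColoring n k)
      = ∑ r : Fin q, (n / q + if r.val < n % q then 1 else 0).descFactorial t := by
    rw [monoCopies, hM, ncard_iUnion_fin _ hdisj]
    refine Finset.sum_congr rfl fun r _ => ?_
    rw [ncard_inj_maps, Fintype.card_fin, hclass r]
  have hsum2 : ∑ r : Fin q, (n / q + if r.val < n % q then 1 else 0).descFactorial t
      = (q - n % q) * ((n / q).descFactorial t)
        + (n % q) * (((n + q - 1) / q).descFactorial t) := by
    rw [Fin.sum_univ_eq_sum_range (fun x => (n / q + if x < n % q then 1 else 0).descFactorial t) q]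
    rw [Finset.range_eq_Ico,
      ← Finset.sum_Ico_consecutive _ (Nat.zero_le (n % q)) (le_of_lt (Nat.mod_lt n hq))]
    have e1 : ∑ x ∈ Finset.Ico 0 (n % q),
        (n / q + if x < n % q then 1 else 0).descFactorial t
        = (n % q) * (((n + q - 1) / q).descFactorial t) :=
      calc ∑ x ∈ Finset.Ico 0 (n % q), (n / q + if x < n % q then 1 else 0).descFactorial t
          = ∑ _x ∈ Finset.Ico 0 (n % q), (((n + q - 1) / q).descFactorial t) :=
            Finset.sum_congr rfl (fun x hx => by
              rw [Finset.mem_Ico] at hx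
              rw [if_pos hx.2, ← ceil_div_val q n hq (by omega)])
        _ = (n % q) * (((n + q - 1) / q).descFactorial t) := by
            rw [Finset.sum_const, Nat.card_Ico, Nat.sub_zero, smul_eq_mul]
    have e2 : ∑ x ∈ Finset.Ico (n % q) q,
        (n / q + if x < n % q then 1 else 0).descFactorial t
        = (q - n % q) * ((n / q).descFactorial t) :=
      calc ∑ x ∈ Finset.Ico (n % q) q, (n / q + if x < n % q then 1 else 0).descFactorial t
          = ∑ _x ∈ Finset.Ico (n % q) q, ((n / q).descFactorial t) :=
            Finset.sum_congr rfl (fun x hx => by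
              rw [Finset.mem_Ico] at hx
              rw [if_neg (by omega), Nat.add_zero])
        _ = (q - n % q) * ((n / q).descFactorial t) := by
            rw [Finset.sum_const, Nat.card_Ico, smul_eq_mul]
    rw [e1, e2]
    ring
  have hpart2 : monoCopies H (turanColoring n k)
      = (q - n % q) * ((n / q).descFactorial t)
        + (n % q) * (((n + q - 1) / q).descFactorial t) := hcount.trans hsum2
  -- part 3
  have hnat := desc_sum_le q t n hq (by omega) ht
  have hkq : ((k : ℝ) - 1) = (q : ℝ) := by
    rw [hqdef]
    push_cast [Nat.cast_sub (by omega : 1 ≤ k)]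
    ring
  have hqpos : (0 : ℝ) < (q : ℝ) := by exact_mod_cast hq
  have hpow : (0 : ℝ) < (q : ℝ) ^ (t - 1) := pow_pos hqpos _
  have hzpow : ((q : ℝ)) ^ ((1 : ℤ) - (t : ℤ)) = ((q : ℝ) ^ (t - 1))⁻¹ := by
    rw [show (1 : ℤ) - (t : ℤ) = -(((t - 1 : ℕ) : ℤ)) by omega,
      zpow_neg, zpow_natCast]
  have hpart3 : (((q - n % q) * ((n / q).descFactorial t)
        + (n % q) * (((n + q - 1) / q).descFactorial t) : ℕ) : ℝ) ≤
      ((k : ℝ) - 1) ^ ((1 : ℤ) - (t : ℤ)) * (n.descFactorial t : ℝ) := by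
    rw [hkq, hzpow, inv_mul_eq_div, le_div_iff₀ hpow]
    have hnat2 : ((q - n % q) * ((n / q).descFactorial t)
        + (n % q) * (((n + q - 1) / q).descFactorial t)) * q ^ (t - 1)
        ≤ n.descFactorial t := by
      rw [Nat.mul_comm]
      exact hnat
    exact_mod_cast hnat2
  refine ⟨?_, hpart2, hpart3⟩
  have h1 : minMono H n 2 ≤ monoCopies H (turanColoring n k) :=
    ciInf_le (OrderBot.bddBelow _) _
  calc (minMono H n 2 : ℝ) ≤ (monoCopies H (turanColoring n k) : ℝ) := by exact_mod_cast h1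
    _ = (((q - n % q) * ((n / q).descFactorial t)
        + (n % q) * (((n + q - 1) / q).descFactorial t) : ℕ) : ℝ) := by rw [hpart2]
    _ ≤ _ := hpart3
end

section
/- Let H be a connected graph with t vertices and chromatic number k ≥ 2. Then the Ramsey multiplicity constant satisfies c(H) ≤ (k−1)^{1−t}. -/
open Filter

set_option maxRecDepth 8000


lemma restrict_le {t n : ℕ} (H : SimpleGraph (Fin t)) (χ : Sym2 (Fin (n+1)) → Fin 2)
    (v : Fin (n+1)) :
    minMono H n 2 ≤ Set.ncard {f : Fin t → Fin (n+1) | Function.Injective f ∧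
      (∃ col, ∀ a b, H.Adj a b → χ s(f a, f b) = col) ∧ ∀ u, f u ≠ v} := by
  set χ' : Sym2 (Fin n) → Fin 2 := fun e => χ (e.map v.succAbove) with hχ'
  have h1 : minMono H n 2 ≤ monoCopies H χ' := ciInf_le (OrderBot.bddBelow _) χ'
  refine h1.trans ?_
  apply Set.ncard_le_ncard_of_injOn (fun g => v.succAbove ∘ g)
  · rintro g ⟨hg, col, hcol⟩
    refine ⟨(Fin.succAbove_right_injective).comp hg, ⟨col, fun a b hab => ?_⟩,
      fun u => Fin.succAbove_ne v (g u)⟩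
    have := hcol a b hab
    simpa [hχ', Sym2.map_pair_eq] using this
  · intro g hg g' hg' h
    funext u
    exact Fin.succAbove_right_injective (congrFun h u)


lemma sum_count {t n : ℕ} (H : SimpleGraph (Fin t)) (χ : Sym2 (Fin (n+1)) → Fin 2) :
    ∑ v : Fin (n+1), Set.ncard {f : Fin t → Fin (n+1) | Function.Injective f ∧
      (∃ col, ∀ a b, H.Adj a b → χ s(f a, f b) = col) ∧ ∀ u, f u ≠ v}
      = (n + 1 - t) * monoCopies H χ := by
  classical
  set P : (Fin t → Fin (n+1)) → Prop := fun f => Function.Injective f ∧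
      (∃ col, ∀ a b, H.Adj a b → χ s(f a, f b) = col) with hP
  set M : Finset (Fin t → Fin (n+1)) := Finset.univ.filter P with hM
  have hMono : monoCopies H χ = M.card := by
    rw [monoCopies, Set.ncard_eq_toFinset_card', Set.toFinset_setOf]
  have key : ∀ v, Set.ncard {f : Fin t → Fin (n+1) | Function.Injective f ∧
      (∃ col, ∀ a b, H.Adj a b → χ s(f a, f b) = col) ∧ ∀ u, f u ≠ v}
      = (M.filter (fun f => ∀ u, f u ≠ v)).card := by
    intro v
    rw [Set.ncard_eq_toFinset_card', Set.toFinset_setOf, hM, Finset.filter_filter]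
    congr 1
    ext f
    simp [hP, and_assoc]
  simp_rw [key]
  have : ∀ f ∈ M, (Finset.univ.filter (fun v : Fin (n+1) => ∀ u, f u ≠ v)).card = n + 1 - t := by
    intro f hf
    have hinj : Function.Injective f := ((Finset.mem_filter.mp hf).2).1
    have himg : Finset.univ.filter (fun v : Fin (n+1) => ∀ u, f u ≠ v)
        = (Finset.univ.image f)ᶜ := by
      ext v
      simp [eq_comm]
    rw [himg, Finset.card_compl, Finset.card_image_of_injective _ hinj]
    simp
  calc ∑ v : Fin (n+1), (M.filter (fun f => ∀ u, f u ≠ v)).card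
      = ∑ v : Fin (n+1), ∑ f ∈ M, (if ∀ u, f u ≠ v then 1 else 0) :=
        Finset.sum_congr rfl fun v _ => Finset.card_filter _ _
    _ = ∑ f ∈ M, ∑ v : Fin (n+1), (if ∀ u, f u ≠ v then 1 else 0) := Finset.sum_comm
    _ = ∑ f ∈ M, (Finset.univ.filter (fun v : Fin (n+1) => ∀ u, f u ≠ v)).card :=
        Finset.sum_congr rfl fun f _ => (Finset.card_filter _ _).symm
    _ = ∑ f ∈ M, (n + 1 - t) := Finset.sum_congr rfl this
    _ = (n + 1 - t) * monoCopies H χ := by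
        rw [Finset.sum_const, hMono, smul_eq_mul, Nat.mul_comm]

lemma mono_step {t n : ℕ} (H : SimpleGraph (Fin t)) :
    (n + 1) * minMono H n 2 ≤ (n + 1 - t) * minMono H (n+1) 2 := by
  obtain ⟨χ₀, hχ₀⟩ := Set.mem_range.mp
    (Nat.sInf_mem (Set.range_nonempty (fun χ : Sym2 (Fin (n+1)) → Fin 2 => monoCopies H χ)))
  have : (n + 1) * minMono H n 2 ≤ (n + 1 - t) * monoCopies H χ₀ := by
    rw [← sum_count H χ₀]
    calc (n + 1) * minMono H n 2 = ∑ _v : Fin (n+1), minMono H n 2 := by simp [Nat.mul_comm]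
      _ ≤ _ := Finset.sum_le_sum fun v _ => restrict_le H χ₀ v
  rwa [hχ₀] at this

lemma ncard_inj (t n : ℕ) : Set.ncard {f : Fin t → Fin n | Function.Injective f} = n.descFactorial t := by
  rw [← Nat.card_coe_set_eq]
  have e : {f : Fin t → Fin n | Function.Injective f} ≃ (Fin t ↪ Fin n) :=
    Equiv.subtypeInjectiveEquivEmbedding _ _
  rw [Nat.card_congr e, Nat.card_eq_fintype_card, Fintype.card_embedding_eq,
    Fintype.card_fin, Fintype.card_fin]

lemma minMono_le_desc {t : ℕ} (H : SimpleGraph (Fin t)) (n : ℕ) :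
    minMono H n 2 ≤ n.descFactorial t := by
  refine le_trans (ciInf_le (OrderBot.bddBelow _) (fun _ => 0)) ?_
  rw [← ncard_inj t n]
  exact Set.ncard_le_ncard (fun f hf => hf.1) (Set.toFinite _)

lemma seq_monotone {t : ℕ} (H : SimpleGraph (Fin t)) :
    Monotone (fun n : ℕ => (minMono H n 2 : ℝ) / (n.descFactorial t : ℝ)) := by
  apply monotone_nat_of_le_succ
  intro n
  rcases le_or_gt (n.descFactorial t) 0 with h0 | h0
  · have : n.descFactorial t = 0 := Nat.le_zero.mp h0
    rw [this]
    simp only [Nat.cast_zero, div_zero]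
    positivity
  · -- n ≥ t
    have hnt : t ≤ n := by
      by_contra h
      exact absurd (Nat.descFactorial_eq_zero_iff_lt.mpr (Nat.lt_of_not_le h)) (by omega)
    have hd1 : 0 < (n+1).descFactorial t :=
      Nat.pos_of_ne_zero (fun h => by
        have := Nat.descFactorial_eq_zero_iff_lt.mp h; omega)
    -- key nat inequality
    have key : minMono H n 2 * ((n+1).descFactorial t) ≤ minMono H (n+1) 2 * n.descFactorial t := by
      have hrel : (n + 1 - t) * (n+1).descFactorial t = (n + 1) * n.descFactorial t := by
        rcases t with _ | t'
        · simp
        · rw [Nat.succ_descFactorial_succ, Nat.descFactorial_succ]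
          have : n + 1 - (t' + 1) = n - t' := by omega
          rw [this]; ring
      have h2 := mono_step (n := n) H
      have : (n + 1 - t) * (minMono H n 2 * (n+1).descFactorial t)
          ≤ (n + 1 - t) * (minMono H (n+1) 2 * n.descFactorial t) := by
        calc (n + 1 - t) * (minMono H n 2 * (n+1).descFactorial t)
            = minMono H n 2 * ((n + 1 - t) * (n+1).descFactorial t) := by ring
          _ = minMono H n 2 * ((n + 1) * n.descFactorial t) := by rw [hrel]
          _ = ((n + 1) * minMono H n 2) * n.descFactorial t := by ring
          _ ≤ ((n + 1 - t) * minMono H (n+1) 2) * n.descFactorial t :=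
              Nat.mul_le_mul_right _ h2
          _ = (n + 1 - t) * (minMono H (n+1) 2 * n.descFactorial t) := by ring
      exact Nat.le_of_mul_le_mul_left this (by omega)
    rw [div_le_div_iff₀ (by exact_mod_cast h0) (by exact_mod_cast hd1)]
    exact_mod_cast key

lemma turan_eval {n k : ℕ} (i j : Fin n) :
    turanColoring n k s(i, j) = if i.val % (k - 1) = j.val % (k - 1) then 0 else 1 :=
  Sym2.lift_mk _ i j

lemma turan_bound {k t n : ℕ} (hk : 2 ≤ k) (H : SimpleGraph (Fin t))
    (hconn : H.Connected) (hchrom : H.chromaticNumber = (k : ℕ∞)) :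
    monoCopies H (turanColoring n k) ≤ (k - 1) * (n / (k - 1) + 1) ^ t := by
  classical
  have hk1 : 0 < k - 1 := by omega
  have hne : Nonempty (Fin t) := hconn.nonempty
  obtain ⟨v₀⟩ := hne
  set T : ℕ → Finset (Fin n) := fun r => Finset.univ.filter (fun x : Fin n => x.val % (k-1) = r)
    with hT
  have hTcard : ∀ r, (T r).card ≤ n / (k - 1) + 1 := by
    intro r
    have : (T r).card ≤ (Finset.range (n / (k-1) + 1)).card := by
      apply Finset.card_le_card_of_injOn (fun x => x.val / (k - 1))
      · intro x _
        rw [Finset.mem_coe, Finset.mem_range]; dsimp only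
        have : x.val / (k-1) ≤ n / (k-1) := Nat.div_le_div_right x.isLt.le
        omega
      · intro x hx y hy hxy
        simp only [hT, Finset.mem_coe, Finset.mem_filter] at hx hy
        have h1 := Nat.div_add_mod x.val (k-1)
        have h2 := Nat.div_add_mod y.val (k-1)
        apply Fin.ext
        dsimp at hxy
        have h3 : (k-1) * (x.val / (k-1)) = (k-1) * (y.val / (k-1)) := by rw [hxy]
        omega
    simpa using this
  rw [monoCopies, Set.ncard_eq_toFinset_card']
  have hsub : {f : Fin t → Fin n | Function.Injective f ∧
      ∃ col : Fin 2, ∀ v w, H.Adj v w → turanColoring n k s(f v, f w) = col}.toFinset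
      ⊆ (Finset.range (k-1)).biUnion
        (fun r => Fintype.piFinset (fun _ : Fin t => T r)) := by
    intro f hf
    rw [Set.mem_toFinset] at hf
    obtain ⟨hinj, col, hcol⟩ := hf
    -- col cannot be 1
    have hcol0 : col = 0 := by
      by_contra hc
      have hc1 : col = 1 := by omega
      have : H.Colorable (k - 1) := by
        refine ⟨SimpleGraph.Coloring.mk
          (fun a => ⟨(f a).val % (k-1), Nat.mod_lt _ hk1⟩) ?_⟩
        intro a b hab heq
        have := hcol a b hab
        rw [turan_eval, hc1] at this
        have hres : (f a).val % (k-1) = (f b).val % (k-1) := by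
          have := congrArg Fin.val heq
          simpa using this
        rw [if_pos hres] at this
        exact absurd this (by decide)
      have hle := this.chromaticNumber_le
      rw [hchrom] at hle
      have : k ≤ k - 1 := by exact_mod_cast hle
      omega
    subst hcol0
    have hstep : ∀ a b : Fin t, H.Adj a b → (f a).val % (k-1) = (f b).val % (k-1) := by
      intro a b hab
      have := hcol a b hab
      rw [turan_eval] at this
      by_contra hne
      rw [if_neg hne] at this
      exact absurd this (by decide)
    have hconst : ∀ a : Fin t, (f a).val % (k-1) = (f v₀).val % (k-1) := by
      intro a
      obtain ⟨w⟩ := hconn.preconnected a v₀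
      induction w with
      | nil => rfl
      | cons h p ih => exact (hstep _ _ h).trans ih
    rw [Finset.mem_biUnion]
    refine ⟨(f v₀).val % (k-1), Finset.mem_range.mpr (Nat.mod_lt _ hk1), ?_⟩
    rw [Fintype.mem_piFinset]
    intro a
    simp only [hT, Finset.mem_filter, Finset.mem_univ, true_and]
    exact hconst a
  calc _ ≤ ((Finset.range (k-1)).biUnion
        (fun r => Fintype.piFinset (fun _ : Fin t => T r))).card := Finset.card_le_card hsub
    _ ≤ ∑ r ∈ Finset.range (k-1), (Fintype.piFinset (fun _ : Fin t => T r)).card :=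
        Finset.card_biUnion_le
    _ ≤ ∑ _r ∈ Finset.range (k-1), (n / (k-1) + 1) ^ t := by
        refine Finset.sum_le_sum fun r _ => ?_
        rw [Fintype.card_piFinset]
        calc ∏ _i : Fin t, (T r).card ≤ ∏ _i : Fin t, (n / (k-1) + 1) :=
              Finset.prod_le_prod (fun _ _ => Nat.zero_le _) (fun i _ => hTcard r)
          _ = (n / (k-1) + 1) ^ t := by simp [Finset.prod_const]
    _ = (k - 1) * (n / (k - 1) + 1) ^ t := by
        rw [Finset.sum_const, Finset.card_range, smul_eq_mul]


lemma factor_tendsto (m i : ℕ) :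
    Tendsto (fun n : ℕ => ((n : ℝ) + m) / ((n : ℝ) - i)) atTop (nhds 1) := by
  have h1 : Tendsto (fun n : ℕ => 1 + (m : ℝ) / n) atTop (nhds 1) := by
    have := (tendsto_const_div_atTop_nhds_zero_nat (m : ℝ)).const_add 1
    simpa using this
  have h2 : Tendsto (fun n : ℕ => 1 - (i : ℝ) / n) atTop (nhds 1) := by
    have := (tendsto_const_div_atTop_nhds_zero_nat (i : ℝ)).const_sub 1
    simpa using this
  have := h1.div h2 (by norm_num)
  rw [div_one] at this
  refine this.congr' ?_
  filter_upwards [eventually_gt_atTop i, eventually_ge_atTop 1] with n hn hn1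
  have hn0 : (n : ℝ) > 0 := by exact_mod_cast hn1
  have hni : (n : ℝ) - i ≠ 0 := by
    have : (i : ℝ) < n := by exact_mod_cast hn
    linarith
  rw [Pi.div_apply]
  field_simp

lemma ratio_tendsto (m t : ℕ) :
    Tendsto (fun n : ℕ => ((n : ℝ) + m) ^ t / (n.descFactorial t : ℝ)) atTop (nhds 1) := by
  have key : Tendsto (fun n : ℕ => ∏ i ∈ Finset.range t, ((n : ℝ) + m) / ((n : ℝ) - i))
      atTop (nhds (∏ _i ∈ Finset.range t, (1 : ℝ))) :=
    tendsto_finset_prod _ (fun i _ => factor_tendsto m i)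
  rw [Finset.prod_const_one] at key
  refine key.congr' ?_
  filter_upwards [eventually_ge_atTop t] with n hn
  rw [Finset.prod_div_distrib, Finset.prod_const, Finset.card_range]
  congr 1
  rw [Nat.descFactorial_eq_prod_range, Nat.cast_prod]
  refine Finset.prod_congr rfl fun i hi => ?_
  rw [Finset.mem_range] at hi
  have : i ≤ n := le_trans hi.le hn
  push_cast [Nat.cast_sub this]
  ring

theorem statement3 (k t : ℕ) (hk : 2 ≤ k) (H : SimpleGraph (Fin t))
    (hconn : H.Connected) (hchrom : H.chromaticNumber = (k : ℕ∞)) :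
    ∃ L : ℝ,
      Tendsto (fun n : ℕ => (minMono H n 2 : ℝ) / (n.descFactorial t : ℝ)) atTop (nhds L) ∧
      L ≤ ((k : ℝ) - 1) ^ ((1 : ℤ) - (t : ℤ)) := by

  classical
  set m : ℕ := k - 1 with hm
  have hm0 : 0 < m := by omega
  have hm0' : (0:ℝ) < (m:ℝ) := by exact_mod_cast hm0
  set a : ℕ → ℝ := fun n => (minMono H n 2 : ℝ) / (n.descFactorial t : ℝ) with ha
  have hmono : Monotone a := seq_monotone H
  have hbdd : BddAbove (Set.range a) := by
    refine ⟨1, ?_⟩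
    rintro x ⟨n, rfl⟩
    simp only [ha]
    rcases eq_or_ne (n.descFactorial t) 0 with h | h
    · rw [h]; norm_num
    · rw [div_le_one (by positivity)]
      exact_mod_cast minMono_le_desc H n
  refine ⟨⨆ n, a n, tendsto_atTop_ciSup hmono hbdd, ?_⟩
  set B : ℝ := (m : ℝ) ^ ((1:ℤ) - (t:ℤ)) with hB
  have hBk : B = ((k : ℝ) - 1) ^ ((1:ℤ) - (t:ℤ)) := by
    rw [hB, hm]
    congr 1
    push_cast [Nat.cast_sub (by omega : 1 ≤ k)]
    ring
  rw [← hBk]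
  set d : ℕ → ℝ := fun n => B * (((n:ℝ) + m) ^ t / (n.descFactorial t : ℝ)) with hd
  have hdlim : Tendsto d atTop (nhds B) := by
    have := (ratio_tendsto m t).const_mul B
    simpa using this
  refine le_of_tendsto_of_tendsto (tendsto_atTop_ciSup hmono hbdd) hdlim ?_
  filter_upwards [eventually_ge_atTop t] with n hn
  have hdesc : 0 < (n.descFactorial t : ℝ) := by
    have : 0 < n.descFactorial t := Nat.pos_of_ne_zero
      (fun h0 => by have := Nat.descFactorial_eq_zero_iff_lt.mp h0; omega)
    exact_mod_cast this
  have h1 : minMono H n 2 ≤ m * (n / m + 1) ^ t := by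
    refine le_trans (ciInf_le (OrderBot.bddBelow _) (turanColoring n k)) ?_
    exact turan_bound hk H hconn hchrom
  have h2 : ((m * (n / m + 1) ^ t : ℕ) : ℝ) ≤ B * ((n:ℝ) + m) ^ t := by
    have hq : ((n / m + 1 : ℕ) : ℝ) ≤ ((n:ℝ) + m) / m := by
      rw [le_div_iff₀ hm0']
      have hdm : n / m * m ≤ n := Nat.div_mul_le_self n m
      have hh : m * (n / m + 1) = n / m * m + m := by ring
      have : m * (n / m + 1) ≤ n + m := by omega
      calc ((n / m + 1 : ℕ) : ℝ) * m = ((m * (n / m + 1) : ℕ) : ℝ) := by push_cast; ring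
        _ ≤ ((n + m : ℕ) : ℝ) := by exact_mod_cast this
        _ = (n:ℝ) + m := by push_cast; ring
    have hpow : ((n / m + 1 : ℕ) : ℝ) ^ t ≤ (((n:ℝ) + m) / m) ^ t :=
      pow_le_pow_left₀ (by positivity) hq t
    have hBrw : B * ((n:ℝ) + m) ^ t = (m:ℝ) * (((n:ℝ) + m) / m) ^ t := by
      rw [hB, div_pow, zpow_sub₀ (ne_of_gt hm0'), zpow_one, zpow_natCast]
      field_simp
    rw [hBrw, Nat.cast_mul, Nat.cast_pow]
    exact mul_le_mul_of_nonneg_left hpow (le_of_lt hm0')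
  have h3 : (minMono H n 2 : ℝ) ≤ B * ((n:ℝ) + m) ^ t := by
    refine le_trans ?_ h2
    exact_mod_cast h1
  show a n ≤ d n
  rw [ha, hd]
  rw [div_le_iff₀ hdesc]
  calc (minMono H n 2 : ℝ) ≤ B * ((n:ℝ) + m) ^ t := h3
    _ = B * (((n:ℝ) + m) ^ t / (n.descFactorial t : ℝ)) * (n.descFactorial t : ℝ) := by
        field_simp
end

section
/- For every graph H on t vertices, there exists a constant C > 0 such that the following holds. For any n, any 2-coloring χ of E(K_n) with the minimum number of monochromatic labeled copies of H (i.e. m(H,χ) = m(H,n)), and any vertex v of K_n, we have (1 − C/n)·(t/n)·m(H,n) ≤ m_v(H,χ) ≤ (1 + C/n)·(t/n)·m(H,n), where m_v(H,χ) denotes the number of monochromatic labeled copies of H in χ whose image contains v. -/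
open Filter

/-- Monochromatic labeled copies of `F` in `χ` whose image contains `v`. -/
noncomputable def monoCopiesVia {α : Type*} [Fintype α] (F : SimpleGraph α)
    {n c : ℕ} (χ : Sym2 (Fin n) → Fin c) (v : Fin n) : ℕ :=
  Set.ncard {f : α → Fin n | Function.Injective f ∧ (∃ u, f u = v) ∧
    ∃ col : Fin c, ∀ a b, F.Adj a b → χ s(f a, f b) = col}

theorem ramsey_two : ∀ s t : ℕ, ∃ R : ℕ, ∀ (n : ℕ) (χ : Sym2 (Fin n) → Fin 2) (S : Finset (Fin n)),
    R ≤ S.card →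
    (∃ A ⊆ S, A.card = s ∧ ∀ a ∈ A, ∀ b ∈ A, a ≠ b → χ s(a, b) = 0) ∨
    (∃ A ⊆ S, A.card = t ∧ ∀ a ∈ A, ∀ b ∈ A, a ≠ b → χ s(a, b) = 1) := by
  intro s
  induction s with
  | zero =>
    intro t
    exact ⟨0, fun n χ S _ => Or.inl ⟨∅, Finset.empty_subset _, rfl, by simp⟩⟩
  | succ s ihs =>
    intro t
    induction t with
    | zero =>
      exact ⟨0, fun n χ S _ => Or.inr ⟨∅, Finset.empty_subset _, rfl, by simp⟩⟩
    | succ t iht =>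
      obtain ⟨R₁, h₁⟩ := ihs (t + 1)
      obtain ⟨R₂, h₂⟩ := iht
      refine ⟨R₁ + R₂ + 1, fun n χ S hS => ?_⟩
      obtain ⟨v, hv⟩ := Finset.card_pos.mp (show 0 < S.card by omega)
      classical
      set S' := S.erase v with hS'
      set N0 := S'.filter (fun w => χ s(v, w) = 0) with hN0
      set N1 := S'.filter (fun w => ¬ χ s(v, w) = 0) with hN1
      have hsplit : N0.card + N1.card = S'.card :=
        Finset.card_filter_add_card_filter_not _
      have hS'card : S'.card = S.card - 1 := Finset.card_erase_of_mem hv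
      have hone : ∀ x : Fin 2, x ≠ 0 → x = 1 := by decide
      by_cases hc : R₁ ≤ N0.card
      · rcases h₁ n χ N0 hc with ⟨A, hA, hcard, hred⟩ | ⟨A, hA, hcard, hblue⟩
        · refine Or.inl ⟨insert v A, ?_, ?_, ?_⟩
          · exact Finset.insert_subset hv ((hA.trans (Finset.filter_subset _ _)).trans
              (Finset.erase_subset _ _))
          · rw [Finset.card_insert_of_notMem, hcard]
            intro hvA
            exact (Finset.notMem_erase v S) ((hA.trans (Finset.filter_subset _ _)) hvA)
          · intro a ha b hb hab
            rcases Finset.mem_insert.mp ha with rfl | haA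
            · rcases Finset.mem_insert.mp hb with rfl | hbA
              · exact absurd rfl hab
              · exact (Finset.mem_filter.mp (hA hbA)).2
            · rcases Finset.mem_insert.mp hb with rfl | hbA
              · rw [Sym2.eq_swap]; exact (Finset.mem_filter.mp (hA haA)).2
              · exact hred a haA b hbA hab
        · exact Or.inr ⟨A, (hA.trans (Finset.filter_subset _ _)).trans (Finset.erase_subset _ _),
            hcard, hblue⟩
      · have hc2 : R₂ ≤ N1.card := by omega
        rcases h₂ n χ N1 hc2 with ⟨A, hA, hcard, hred⟩ | ⟨A, hA, hcard, hblue⟩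
        · exact Or.inl ⟨A, (hA.trans (Finset.filter_subset _ _)).trans (Finset.erase_subset _ _),
            hcard, hred⟩
        · refine Or.inr ⟨insert v A, ?_, ?_, ?_⟩
          · exact Finset.insert_subset hv ((hA.trans (Finset.filter_subset _ _)).trans
              (Finset.erase_subset _ _))
          · rw [Finset.card_insert_of_notMem, hcard]
            intro hvA
            exact (Finset.notMem_erase v S) ((hA.trans (Finset.filter_subset _ _)) hvA)
          · intro a ha b hb hab
            rcases Finset.mem_insert.mp ha with rfl | haA
            · rcases Finset.mem_insert.mp hb with rfl | hbA
              · exact absurd rfl hab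
              · exact hone _ (Finset.mem_filter.mp (hA hbA)).2
            · rcases Finset.mem_insert.mp hb with rfl | hbA
              · rw [Sym2.eq_swap]; exact hone _ (Finset.mem_filter.mp (hA haA)).2
              · exact hblue a haA b hbA hab

noncomputable def monoSet {t n : ℕ} (H : SimpleGraph (Fin t)) (χ : Sym2 (Fin n) → Fin 2) :
    Set (Fin t → Fin n) :=
  {f | Function.Injective f ∧ ∃ col : Fin 2, ∀ v w, H.Adj v w → χ s(f v, f w) = col}

theorem mono_lower (t : ℕ) (H : SimpleGraph (Fin t)) :
    ∃ R : ℕ, t ≤ R ∧ ∀ n : ℕ, R ≤ n → ∀ χ : Sym2 (Fin n) → Fin 2,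
      n.choose t ≤ R.choose t * (monoSet H χ).ncard := by
  classical
  obtain ⟨R₀, hram⟩ := ramsey_two t t
  refine ⟨max R₀ t, le_max_right _ _, fun n hn χ => ?_⟩
  set R := max R₀ t with hR
  have htR : t ≤ R := le_max_right _ _
  set P := monoSet H χ with hP
  have hPfin : P.Finite := Set.toFinite _
  set Pf := hPfin.toFinset with hPf
  have hcard : P.ncard = Pf.card := Set.ncard_eq_toFinset_card _ _
  -- every R-subset contains a mono copy
  have key : ∀ S ∈ Finset.univ.powersetCard R, ∃ f ∈ Pf, ∀ i, f i ∈ S := by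
    intro S hS
    obtain ⟨-, hScard⟩ := Finset.mem_powersetCard.mp hS
    have hram' := hram n χ S (by rw [hScard]; exact le_max_left _ _)
    have : ∃ A ⊆ S, ∃ col : Fin 2, A.card = t ∧
        ∀ a ∈ A, ∀ b ∈ A, a ≠ b → χ s(a, b) = col := by
      rcases hram' with ⟨A, h1, h2, h3⟩ | ⟨A, h1, h2, h3⟩
      exacts [⟨A, h1, 0, h2, h3⟩, ⟨A, h1, 1, h2, h3⟩]
    obtain ⟨A, hAS, col, hAcard, hmono⟩ := this
    set e := A.equivFin with he
    refine ⟨fun i => (e.symm (Fin.cast hAcard.symm i) : Fin n), ?_, ?_⟩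
    · rw [hPf, Set.Finite.mem_toFinset]
      have hinj : Function.Injective fun i : Fin t => (e.symm (Fin.cast hAcard.symm i) : Fin n) := by
        intro a b hab
        have := e.symm.injective (Subtype.ext hab)
        exact Fin.ext (by simpa using congrArg Fin.val this)
      refine ⟨hinj, col, fun a b hab => ?_⟩
      exact hmono _ ((e.symm (Fin.cast hAcard.symm a)).2) _ ((e.symm (Fin.cast hAcard.symm b)).2)
        (fun h => hab.ne (hinj h))
    · intro i
      exact hAS (e.symm (Fin.cast hAcard.symm i)).2
  -- double counting
  have hsub : Finset.univ.powersetCard R ⊆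
      Pf.biUnion (fun f => (Finset.univ.powersetCard R).filter (fun S => ∀ i, f i ∈ S)) := by
    intro S hS
    obtain ⟨f, hf, hfS⟩ := key S hS
    exact Finset.mem_biUnion.mpr ⟨f, hf, Finset.mem_filter.mpr ⟨hS, hfS⟩⟩
  have hcount : ∀ f ∈ Pf,
      ((Finset.univ.powersetCard R).filter (fun S => ∀ i, f i ∈ S)).card ≤
        (n - t).choose (R - t) := by
    intro f hf
    have hinj : Function.Injective f := ((Set.Finite.mem_toFinset _).mp hf).1
    set B := Finset.image f Finset.univ with hB
    have hBcard : B.card = t := by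
      rw [hB, Finset.card_image_of_injective _ hinj, Finset.card_univ, Fintype.card_fin]
    have hBsub : ∀ S ∈ (Finset.univ.powersetCard R).filter (fun S => ∀ i, f i ∈ S), B ⊆ S := by
      intro S hS x hx
      obtain ⟨i, -, rfl⟩ := Finset.mem_image.mp hx
      exact (Finset.mem_filter.mp hS).2 i
    calc ((Finset.univ.powersetCard R).filter (fun S => ∀ i, f i ∈ S)).card
        ≤ ((Finset.univ \ B).powersetCard (R - t)).card := by
          apply Finset.card_le_card_of_injOn (fun S => S \ B)
          · intro S hS
            have hSB := hBsub S hS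
            obtain ⟨-, hScard⟩ := Finset.mem_powersetCard.mp (Finset.mem_filter.mp hS).1
            refine Finset.mem_powersetCard.mpr ⟨Finset.sdiff_subset_sdiff (Finset.subset_univ _)
              (le_refl _), ?_⟩
            rw [Finset.card_sdiff_of_subset hSB, hScard, hBcard]
          · intro S₁ h₁ S₂ h₂ h12
            have e₁ := Finset.sdiff_union_of_subset (hBsub S₁ h₁)
            have e₂ := Finset.sdiff_union_of_subset (hBsub S₂ h₂)
            have h12' : S₁ \ B = S₂ \ B := h12
            rw [← e₁, ← e₂, h12']
      _ = (n - t).choose (R - t) := by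
          rw [Finset.card_powersetCard, Finset.card_sdiff_of_subset (Finset.subset_univ _),
            Finset.card_univ, Fintype.card_fin, hBcard]
  have main : n.choose R ≤ Pf.card * (n - t).choose (R - t) := by
    calc n.choose R = (Finset.univ.powersetCard R).card := by
          rw [Finset.card_powersetCard, Finset.card_univ, Fintype.card_fin]
      _ ≤ (Pf.biUnion _).card := Finset.card_le_card hsub
      _ ≤ ∑ f ∈ Pf, ((Finset.univ.powersetCard R).filter (fun S => ∀ i, f i ∈ S)).card :=
          Finset.card_biUnion_le
      _ ≤ ∑ _f ∈ Pf, (n - t).choose (R - t) := Finset.sum_le_sum hcount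
      _ = Pf.card * (n - t).choose (R - t) := by rw [Finset.sum_const, smul_eq_mul]
  have hpos : 0 < (n - t).choose (R - t) := Nat.choose_pos (by omega)
  have hmul := Nat.choose_mul (n := n) htR
  -- n.choose R * R.choose t = n.choose t * (n-t).choose (R-t)
  have : n.choose t * (n - t).choose (R - t) ≤ R.choose t * Pf.card * (n - t).choose (R - t) := by
    calc n.choose t * (n - t).choose (R - t) = n.choose R * R.choose t := hmul.symm
      _ ≤ (Pf.card * (n - t).choose (R - t)) * R.choose t := Nat.mul_le_mul_right _ main
      _ = R.choose t * Pf.card * (n - t).choose (R - t) := by ring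
  have := Nat.le_of_mul_le_mul_right this hpos
  rwa [hcard]

theorem swap_bound {t n : ℕ} (H : SimpleGraph (Fin t)) (χ : Sym2 (Fin n) → Fin 2)
    (hmin : ∀ ψ : Sym2 (Fin n) → Fin 2, (monoSet H χ).ncard ≤ (monoSet H ψ).ncard)
    {u v : Fin n} (huv : u ≠ v) :
    (monoSet H χ ∩ {f | ∃ a, f a = v}).ncard ≤
      (monoSet H χ ∩ {f | ∃ a, f a = u}).ncard +
      {f : Fin t → Fin n | Function.Injective f ∧ (∃ a, f a = u) ∧ (∃ b, f b = v)}.ncard := by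
  classical
  set ρ : Fin n → Fin n := fun x => if x = v then u else x with hρ
  have hρv : ∀ x, x ≠ v → ρ x = x := fun x hx => if_neg hx
  have hρinj : ∀ x y : Fin n, x ≠ u → y ≠ u → ρ x = ρ y → x = y := by
    intro x y hx hy hxy
    simp only [hρ] at hxy
    by_cases hxv : x = v
    · by_cases hyv : y = v
      · rw [hxv, hyv]
      · rw [if_pos hxv, if_neg hyv] at hxy
        exact absurd hxy.symm hy
    · by_cases hyv : y = v
      · rw [if_neg hxv, if_pos hyv] at hxy
        exact absurd hxy hx
      · rwa [if_neg hxv, if_neg hyv] at hxy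
  set ψ : Sym2 (Fin n) → Fin 2 := fun e => χ (Sym2.map ρ e) with hψ
  have hψe : ∀ x y : Fin n, ψ s(x, y) = χ s(ρ x, ρ y) := by
    intro x y
    show χ (Sym2.map ρ s(x, y)) = _
    rw [Sym2.map_pair_eq]
  set Rv : Set (Fin t → Fin n) := {f | ∃ a, f a = v} with hRv
  set Ru : Set (Fin t → Fin n) := {f | ∃ a, f a = u} with hRu
  have houtside : monoSet H χ \ Rv = monoSet H ψ \ Rv := by
    ext f
    simp only [Set.mem_diff, hRv, Set.mem_setOf_eq]
    constructor <;> rintro ⟨⟨hinj, col, hcol⟩, hv⟩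
    · refine ⟨⟨hinj, col, fun a b hab => ?_⟩, hv⟩
      rw [hψe, hρv _ (fun h => hv ⟨a, h⟩), hρv _ (fun h => hv ⟨b, h⟩)]
      exact hcol a b hab
    · refine ⟨⟨hinj, col, fun a b hab => ?_⟩, hv⟩
      have := hcol a b hab
      rwa [hψe, hρv _ (fun h => hv ⟨a, h⟩), hρv _ (fun h => hv ⟨b, h⟩)] at this
  have himage : (fun f => ρ ∘ f) '' ((monoSet H ψ ∩ Rv) \ Ru) ⊆ (monoSet H χ ∩ Ru) \ Rv := by
    rintro g ⟨f, ⟨⟨⟨hinj, col, hcol⟩, hfv⟩, hfu⟩, rfl⟩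
    have hne : ∀ a, f a ≠ u := fun a h => hfu ⟨a, h⟩
    refine ⟨⟨⟨?_, ⟨col, ?_⟩⟩, ?_⟩, ?_⟩
    · intro a b hab
      exact hinj (hρinj _ _ (hne a) (hne b) hab)
    · intro a b hab
      have := hcol a b hab
      rwa [hψe] at this
    · obtain ⟨a, ha⟩ := hfv
      refine ⟨a, ?_⟩
      show ρ (f a) = u
      rw [ha]
      simp [hρ]
    · rintro ⟨a, ha⟩
      have ha' : ρ (f a) = v := ha
      by_cases h : f a = v
      · rw [h] at ha'
        simp only [hρ, if_pos rfl] at ha'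
        exact huv ha'
      · rw [hρv _ h] at ha'
        exact h ha'
  have hinjOn : Set.InjOn (fun f => ρ ∘ f) ((monoSet H ψ ∩ Rv) \ Ru) := by
    rintro f₁ ⟨-, hf₁u⟩ f₂ ⟨-, hf₂u⟩ h12
    funext a
    exact hρinj _ _ (fun h => hf₁u ⟨a, h⟩) (fun h => hf₂u ⟨a, h⟩) (congrFun h12 a)
  have h3 : ((monoSet H ψ ∩ Rv) \ Ru).ncard ≤ ((monoSet H χ ∩ Ru) \ Rv).ncard := by
    rw [← Set.ncard_image_of_injOn hinjOn]
    exact Set.ncard_le_ncard himage (Set.toFinite _)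
  have e1 : (monoSet H χ ∩ Rv).ncard + (monoSet H χ \ Rv).ncard = (monoSet H χ).ncard :=
    Set.ncard_inter_add_ncard_diff_eq_ncard _ _ (Set.toFinite _)
  have e2 : (monoSet H ψ ∩ Rv).ncard + (monoSet H ψ \ Rv).ncard = (monoSet H ψ).ncard :=
    Set.ncard_inter_add_ncard_diff_eq_ncard _ _ (Set.toFinite _)
  have e3 : ((monoSet H ψ ∩ Rv) ∩ Ru).ncard + ((monoSet H ψ ∩ Rv) \ Ru).ncard
      = (monoSet H ψ ∩ Rv).ncard :=
    Set.ncard_inter_add_ncard_diff_eq_ncard _ _ (Set.toFinite _)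
  have hD : ((monoSet H ψ ∩ Rv) ∩ Ru).ncard ≤
      {f : Fin t → Fin n | Function.Injective f ∧ (∃ a, f a = u) ∧ (∃ b, f b = v)}.ncard := by
    apply Set.ncard_le_ncard _ (Set.toFinite _)
    rintro f ⟨⟨⟨hinj, -⟩, hv⟩, hu⟩
    exact ⟨hinj, hu, hv⟩
  have h4 : ((monoSet H χ ∩ Ru) \ Rv).ncard ≤ (monoSet H χ ∩ Ru).ncard :=
    Set.ncard_le_ncard Set.diff_subset (Set.toFinite _)
  have hmin' := hmin ψ
  have houtcard : (monoSet H χ \ Rv).ncard = (monoSet H ψ \ Rv).ncard := by rw [houtside]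
  set a1 := (monoSet H χ ∩ Rv).ncard
  set a2 := (monoSet H χ \ Rv).ncard
  set a3 := (monoSet H ψ ∩ Rv).ncard
  set a4 := (monoSet H ψ \ Rv).ncard
  set a5 := ((monoSet H ψ ∩ Rv) ∩ Ru).ncard
  set a6 := ((monoSet H ψ ∩ Rv) \ Ru).ncard
  set a7 := ((monoSet H χ ∩ Ru) \ Rv).ncard
  set a8 := (monoSet H χ ∩ Ru).ncard
  set a9 := {f : Fin t → Fin n | Function.Injective f ∧ (∃ a, f a = u) ∧ (∃ b, f b = v)}.ncard
  set a10 := (monoSet H χ).ncard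
  set a11 := (monoSet H ψ).ncard
  clear_value a1 a2 a3 a4 a5 a6 a7 a8 a9 a10 a11
  clear * - e1 e2 e3 hD h3 h4 hmin' houtcard
  omega

theorem D_bound {t n : ℕ} {u v : Fin n} (huv : u ≠ v) :
    {f : Fin t → Fin n | Function.Injective f ∧ (∃ a, f a = u) ∧ (∃ b, f b = v)}.ncard ≤
      t * (t - 1) * n ^ (t - 2) := by
  classical
  set D := {f : Fin t → Fin n | Function.Injective f ∧ (∃ a, f a = u) ∧ (∃ b, f b = v)} with hD
  have hfin : D.Finite := Set.toFinite _
  rw [Set.ncard_eq_toFinset_card _ hfin]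
  have hsub : hfin.toFinset ⊆ (Finset.univ.offDiag).biUnion
      (fun p : Fin t × Fin t => Finset.univ.filter (fun f : Fin t → Fin n =>
        f p.1 = u ∧ f p.2 = v)) := by
    intro f hf
    rw [Set.Finite.mem_toFinset] at hf
    obtain ⟨hinj, ⟨a, ha⟩, ⟨b, hb⟩⟩ := hf
    have hab : a ≠ b := fun h => huv (by rw [← ha, ← hb, h])
    exact Finset.mem_biUnion.mpr ⟨(a, b), Finset.mem_offDiag.mpr ⟨Finset.mem_univ _,
      Finset.mem_univ _, hab⟩, Finset.mem_filter.mpr ⟨Finset.mem_univ _, ha, hb⟩⟩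
  have hpiece : ∀ p : Fin t × Fin t, p ∈ Finset.univ.offDiag →
      (Finset.univ.filter (fun f : Fin t → Fin n => f p.1 = u ∧ f p.2 = v)).card ≤
        n ^ (t - 2) := by
    rintro ⟨a, b⟩ hp
    have hab : a ≠ b := (Finset.mem_offDiag.mp hp).2.2
    rw [← Fintype.card_subtype]
    have hinj : Function.Injective
        (fun (f : {f : Fin t → Fin n // f a = u ∧ f b = v}) =>
          (fun i : {i : Fin t // i ≠ a ∧ i ≠ b} => f.1 i.1)) := by
      rintro ⟨f, hfa, hfb⟩ ⟨g, hga, hgb⟩ hfg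
      apply Subtype.ext
      funext j
      show f j = g j
      by_cases hja : j = a
      · subst hja; rw [hfa, hga]
      · by_cases hjb : j = b
        · subst hjb; rw [hfb, hgb]
        · exact congrFun hfg ⟨j, hja, hjb⟩
    calc Fintype.card {f : Fin t → Fin n // f a = u ∧ f b = v}
        ≤ Fintype.card ({i : Fin t // i ≠ a ∧ i ≠ b} → Fin n) :=
          Fintype.card_le_of_injective _ hinj
      _ = n ^ (t - 2) := by
          rw [Fintype.card_fun, Fintype.card_fin]
          congr 1
          rw [Fintype.card_subtype]
          have : (Finset.univ.filter fun i : Fin t => i ≠ a ∧ i ≠ b)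
              = (Finset.univ.erase a).erase b := by
            ext i
            simp only [Finset.mem_filter, Finset.mem_univ, true_and, Finset.mem_erase,
              and_comm, and_true]
          rw [this, Finset.card_erase_of_mem
              (Finset.mem_erase.mpr ⟨hab.symm, Finset.mem_univ b⟩),
            Finset.card_erase_of_mem (Finset.mem_univ a), Finset.card_univ, Fintype.card_fin]
          omega
  calc hfin.toFinset.card ≤ _ := Finset.card_le_card hsub
    _ ≤ ∑ p ∈ Finset.univ.offDiag, (Finset.univ.filter (fun f : Fin t → Fin n =>
          f p.1 = u ∧ f p.2 = v)).card := Finset.card_biUnion_le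
    _ ≤ (Finset.univ.offDiag).card * n ^ (t - 2) := by
        rw [← smul_eq_mul]
        exact Finset.sum_le_card_nsmul _ _ _ hpiece
    _ = t * (t - 1) * n ^ (t - 2) := by
        rw [Finset.offDiag_card, Finset.card_univ, Fintype.card_fin]
        congr 1
        cases t with
        | zero => simp
        | succ k => simp [Nat.succ_mul, Nat.mul_succ]

theorem sum_via {t n : ℕ} (H : SimpleGraph (Fin t)) (χ : Sym2 (Fin n) → Fin 2) :
    ∑ v : Fin n, (monoSet H χ ∩ {f | ∃ a, f a = v}).ncard = t * (monoSet H χ).ncard := by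
  classical
  set P := monoSet H χ with hP
  have hPfin : P.Finite := Set.toFinite _
  set Pf := hPfin.toFinset with hPf
  have hterm : ∀ v : Fin n, (P ∩ {f | ∃ a, f a = v}).ncard
      = (Pf.filter (fun f => ∃ a, f a = v)).card := by
    intro v
    rw [Set.ncard_eq_toFinset_card _ (Set.toFinite _)]
    congr 1
    ext f
    simp only [Set.Finite.mem_toFinset, Set.mem_inter_iff, Set.mem_setOf_eq, Finset.mem_filter,
      hPf]
  calc ∑ v : Fin n, (P ∩ {f | ∃ a, f a = v}).ncard
      = ∑ v : Fin n, ∑ f ∈ Pf, (if ∃ a, f a = v then 1 else 0) := by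
        refine Finset.sum_congr rfl fun v _ => ?_
        rw [hterm v, Finset.card_filter]
    _ = ∑ f ∈ Pf, ∑ v : Fin n, (if ∃ a, f a = v then 1 else 0) := Finset.sum_comm
    _ = ∑ f ∈ Pf, t := by
        refine Finset.sum_congr rfl fun f hf => ?_
        have hinj : Function.Injective f := ((Set.Finite.mem_toFinset _).mp hf).1
        rw [← Finset.card_filter]
        have : Finset.univ.filter (fun v => ∃ a, f a = v) = Finset.image f Finset.univ := by
          ext x
          simp [eq_comm]
        rw [this, Finset.card_image_of_injective _ hinj, Finset.card_univ, Fintype.card_fin]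
    _ = t * P.ncard := by
        rw [Finset.sum_const, smul_eq_mul, Set.ncard_eq_toFinset_card _ hPfin, mul_comm]

theorem statement5 (t : ℕ) (H : SimpleGraph (Fin t)) :
    ∃ C : ℝ, 0 < C ∧ ∀ (n : ℕ) (χ : Sym2 (Fin n) → Fin 2),
      monoCopies H χ = minMono H n 2 → ∀ v : Fin n,
        (1 - C / n) * ((t : ℝ) / n) * (minMono H n 2 : ℝ) ≤ (monoCopiesVia H χ v : ℝ) ∧
        (monoCopiesVia H χ v : ℝ) ≤ (1 + C / n) * ((t : ℝ) / n) * (minMono H n 2 : ℝ) := by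
  classical
  obtain ⟨R, htR, hsuper⟩ := mono_lower t H
  obtain ⟨K₂, hK₂⟩ : ∃ x : ℕ, x = 2 ^ t * t.factorial * R.choose t := ⟨_, rfl⟩
  obtain ⟨N, hN⟩ : ∃ x : ℕ, x = max R (2 * t) := ⟨_, rfl⟩
  obtain ⟨Cn, hCn⟩ : ∃ x : ℕ, x = N * N + N + t * K₂ + 1 := ⟨_, rfl⟩
  have hCpos : 0 < Cn := by rw [hCn]; exact Nat.succ_pos _
  refine ⟨(Cn : ℝ), by exact_mod_cast hCpos, ?_⟩
  intro n χ hχ v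
  have hn0 : 0 < n := v.pos
  have hnR : (0:ℝ) < (n:ℝ) := by exact_mod_cast hn0
  by_cases ht0 : t = 0
  · subst ht0
    have hmv0 : monoCopiesVia H χ v = 0 := by
      have hset : {f : Fin 0 → Fin n | Function.Injective f ∧ (∃ u, f u = v) ∧
          ∃ col : Fin 2, ∀ a b, H.Adj a b → χ s(f a, f b) = col} = ∅ := by
        ext f
        simp only [Set.mem_setOf_eq, Set.mem_empty_iff_false, iff_false, not_and]
        rintro - ⟨u, -⟩
        exact u.elim0
      show Set.ncard _ = 0
      rw [hset, Set.ncard_empty]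
    rw [hmv0]
    norm_num
  have ht1 : 1 ≤ t := Nat.one_le_iff_ne_zero.mpr ht0
  have hmc : monoCopies H χ = (monoSet H χ).ncard := rfl
  have hviac : monoCopiesVia H χ v = (monoSet H χ ∩ {f | ∃ a, f a = v}).ncard := by
    unfold monoCopiesVia monoSet
    apply congrArg Set.ncard
    ext f
    simp only [Set.mem_setOf_eq, Set.mem_inter_iff]
    tauto
  have hmin : ∀ ψ : Sym2 (Fin n) → Fin 2, (monoSet H χ).ncard ≤ (monoSet H ψ).ncard := by
    intro ψ
    rw [← hmc, hχ]
    exact Nat.sInf_le ⟨ψ, rfl⟩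
  obtain ⟨m, hm⟩ : ∃ x : ℕ, x = minMono H n 2 := ⟨_, rfl⟩
  obtain ⟨mv, hmv⟩ : ∃ x : ℕ, x = monoCopiesVia H χ v := ⟨_, rfl⟩
  rw [← hm, ← hmv]
  have hmval : (monoSet H χ).ncard = m := by rw [hm, ← hχ, hmc]
  obtain ⟨E, hE⟩ : ∃ x : ℕ, x = t * (t - 1) * n ^ (t - 2) := ⟨_, rfl⟩
  obtain ⟨g, hg⟩ : ∃ g : Fin n → ℕ, g = fun u => (monoSet H χ ∩ {f | ∃ a, f a = u}).ncard :=
    ⟨_, rfl⟩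
  have hgv : mv = g v := by rw [hmv, hviac, hg]
  have hsum : ∑ u : Fin n, g u = t * m := by rw [hg]; rw [sum_via H χ, hmval]
  have h1 : ∀ u : Fin n, g v ≤ g u + E := by
    intro u
    by_cases h : u = v
    · subst h; exact Nat.le_add_right _ _
    · rw [hg, hE]
      exact le_trans (swap_bound H χ hmin h) (Nat.add_le_add_left (D_bound h) _)
  have h2 : ∀ u : Fin n, g u ≤ g v + E := by
    intro u
    by_cases h : u = v
    · subst h; exact Nat.le_add_right _ _
    · rw [hg, hE]
      exact le_trans (swap_bound H χ hmin (Ne.symm h))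
        (Nat.add_le_add_left (D_bound (Ne.symm h)) _)
  have key1 : n * mv ≤ t * m + n * E := by
    calc n * mv = ∑ _u : Fin n, g v := by
          rw [Finset.sum_const, Finset.card_univ, Fintype.card_fin, smul_eq_mul, hgv]
      _ ≤ ∑ u : Fin n, (g u + E) := Finset.sum_le_sum (fun u _ => h1 u)
      _ = t * m + n * E := by
          rw [Finset.sum_add_distrib, hsum, Finset.sum_const, Finset.card_univ,
            Fintype.card_fin, smul_eq_mul]
  have key2 : t * m ≤ n * mv + n * E := by
    calc t * m = ∑ u : Fin n, g u := hsum.symm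
      _ ≤ ∑ _u : Fin n, (g v + E) := Finset.sum_le_sum (fun u _ => h2 u)
      _ = n * mv + n * E := by
          rw [Finset.sum_const, Finset.card_univ, Fintype.card_fin, smul_eq_mul, hgv,
            Nat.mul_add]
  by_cases hnN : n ≤ N
  · -- small n
    have hnC : n ≤ Cn := by
      have h0 : 0 ≤ N * N := Nat.zero_le _
      have h1' : 0 ≤ t * K₂ := Nat.zero_le _
      have : N ≤ Cn := by rw [hCn]; linarith
      exact le_trans hnN this
    have hnnC : n * n ≤ Cn := by
      have h1' : n * n ≤ N * N := Nat.mul_le_mul hnN hnN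
      have : N * N ≤ Cn := by rw [hCn]; linarith [Nat.zero_le N, Nat.zero_le (t * K₂)]
      exact le_trans h1' this
    constructor
    · have h1' : (1 : ℝ) - (Cn : ℝ) / n ≤ 0 := by
        rw [sub_nonpos, le_div_iff₀ hnR]
        have : (n : ℝ) ≤ Cn := by exact_mod_cast hnC
        linarith
      have h2' : (0:ℝ) ≤ ((t : ℝ) / n) * (m : ℝ) := by positivity
      calc (1 - (Cn:ℝ) / n) * ((t : ℝ) / n) * (m : ℝ)
          = (1 - (Cn:ℝ) / n) * (((t : ℝ) / n) * (m : ℝ)) := by ring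
        _ ≤ 0 := mul_nonpos_of_nonpos_of_nonneg h1' h2'
        _ ≤ (mv : ℝ) := by positivity
    · have hmvle : mv ≤ m := by
        rw [hmv, hviac, ← hmval]
        exact Set.ncard_le_ncard Set.inter_subset_left (Set.toFinite _)
      rcases Nat.eq_zero_or_pos m with hm0 | hmpos
      · have h0 : mv = 0 := by clear * - hm0 hmvle; omega
        rw [h0, hm0]
        norm_num
      · have hnsq : (n:ℝ) * n ≤ Cn := by exact_mod_cast hnnC
        have hone : (1:ℝ) ≤ (1 + (Cn:ℝ)/n) * ((t:ℝ)/n) := by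
          have e0 : (1:ℝ) ≤ (Cn:ℝ)/n * (1/n) := by
            rw [div_mul_div_comm, mul_one, one_le_div (by positivity)]
            exact hnsq
          refine e0.trans ?_
          have ht1' : (1:ℝ) ≤ (t:ℝ) := by exact_mod_cast ht1
          apply mul_le_mul
          · have : (0:ℝ) ≤ (Cn:ℝ)/n := by positivity
            linarith
          · gcongr
          · positivity
          · positivity
        calc (mv : ℝ) ≤ (m : ℝ) := by exact_mod_cast hmvle
          _ = 1 * (m : ℝ) := by ring
          _ ≤ ((1 + (Cn:ℝ)/n) * ((t:ℝ)/n)) * (m:ℝ) :=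
              mul_le_mul_of_nonneg_right hone (by positivity)
  · -- large n
    push_neg at hnN
    have hnR' : R ≤ n := le_trans (by rw [hN]; exact le_max_left _ _) hnN.le
    have hn2t : 2 * t ≤ n := le_trans (by rw [hN]; exact le_max_right _ _) hnN.le
    have hlow : n ^ t ≤ K₂ * m := by
      have hsup := hsuper n hnR' χ
      rw [hmval] at hsup
      have hstep : n ^ t ≤ 2 ^ t * t.factorial * n.choose t := by
        have h2n : n ≤ 2 * (n + 1 - t) := by clear * - hn2t; omega
        calc n ^ t ≤ (2 * (n + 1 - t)) ^ t := Nat.pow_le_pow_left h2n t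
          _ = 2 ^ t * (n + 1 - t) ^ t := by rw [mul_pow]
          _ ≤ 2 ^ t * n.descFactorial t :=
              Nat.mul_le_mul_left _ (n.pow_sub_le_descFactorial t)
          _ = 2 ^ t * (t.factorial * n.choose t) := by
              rw [Nat.descFactorial_eq_factorial_mul_choose]
          _ = 2 ^ t * t.factorial * n.choose t := by ring
      calc n ^ t ≤ 2 ^ t * t.factorial * n.choose t := hstep
        _ ≤ 2 ^ t * t.factorial * (R.choose t * m) := Nat.mul_le_mul_left _ hsup
        _ = K₂ * m := by rw [hK₂]; ring
    have hEbound : n * n * E ≤ Cn * (t * m) := by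
      rcases Nat.lt_or_ge t 2 with h | h
      · have hE0 : E = 0 := by
          have : t - 1 = 0 := by clear * - h; omega
          rw [hE, this]
          simp
        rw [hE0]
        simp
      · have hEeq : n * n * E = t * (t - 1) * n ^ t := by
          rw [hE,
            show n * n * (t * (t-1) * n ^ (t-2)) = t * (t-1) * (n^2 * n^(t-2)) by ring,
            ← pow_add]
          congr 2
          clear * - h
          omega
        have htK : (t - 1) * K₂ ≤ Cn := by
          have h1' : (t - 1) * K₂ ≤ t * K₂ := Nat.mul_le_mul_right _ (by clear * -; omega)
          have h2' : t * K₂ ≤ Cn := by rw [hCn]; linarith [Nat.zero_le (N * N), Nat.zero_le N]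
          exact le_trans h1' h2'
        calc n * n * E = t * (t - 1) * n ^ t := hEeq
          _ ≤ t * (t - 1) * (K₂ * m) := Nat.mul_le_mul_left _ hlow
          _ = t * ((t - 1) * K₂ * m) := by ring
          _ ≤ t * (Cn * m) := by
              apply Nat.mul_le_mul_left
              exact Nat.mul_le_mul_right _ htK
          _ = Cn * (t * m) := by ring
    have K1 : (n:ℝ) * n * mv ≤ (n:ℝ) * (t * m) + (Cn:ℝ) * (t * m) := by
      have hnat : n * n * mv ≤ n * (t * m) + Cn * (t * m) := by
        calc n * n * mv = n * (n * mv) := by ring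
          _ ≤ n * (t * m + n * E) := Nat.mul_le_mul_left _ key1
          _ = n * (t * m) + n * n * E := by ring
          _ ≤ n * (t * m) + Cn * (t * m) := Nat.add_le_add_left hEbound _
      exact_mod_cast hnat
    have K2 : (n:ℝ) * (t * m) ≤ (n:ℝ) * n * mv + (Cn:ℝ) * (t * m) := by
      have hnat : n * (t * m) ≤ n * n * mv + Cn * (t * m) := by
        calc n * (t * m) ≤ n * (n * mv + n * E) := Nat.mul_le_mul_left _ key2
          _ = n * n * mv + n * n * E := by ring
          _ ≤ n * n * mv + Cn * (t * m) := Nat.add_le_add_left hEbound _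
      exact_mod_cast hnat
    have hnn : (0:ℝ) < (n:ℝ) * n := by positivity
    constructor
    · rw [show ((1:ℝ) - (Cn:ℝ)/n) * ((t:ℝ)/n) * (m:ℝ)
          = ((n:ℝ) * ((t:ℝ) * m) - (Cn:ℝ) * ((t:ℝ) * m)) / ((n:ℝ) * n) by
            field_simp]
      rw [div_le_iff₀ hnn]
      push_cast at K2 ⊢
      linarith
    · rw [show ((1:ℝ) + (Cn:ℝ)/n) * ((t:ℝ)/n) * (m:ℝ)
          = ((n:ℝ) * ((t:ℝ) * m) + (Cn:ℝ) * ((t:ℝ) * m)) / ((n:ℝ) * n) by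
            field_simp]
      rw [le_div_iff₀ hnn]
      push_cast at K1 ⊢
      linarith
end

section
/- Let H_1 and H_2 be graphs on h_1 and h_2 vertices respectively, with h_1, h_2 ≤ h. For any n ≥ 4^h, any 2-coloring of E(K_n) contains at least 4^{−h²}·(n)_{h_1} red labeled copies of H_1 or at least 4^{−h²}·(n)_{h_2} blue labeled copies of H_2. -/
open Filter

namespace S6


/-- exponent  -/
def E (a b : ℕ) : ℕ := if a = 0 ∨ b = 0 then 0 else (max a b + 1) * (max a b + 2 * min a b) / 2 - 1

lemma E_eq {a b : ℕ} (ha : 1 ≤ a) (hb : 1 ≤ b) :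
    2 * (E a b + 1) = (max a b + 1) * (max a b + 2 * min a b) := by
  have hM : 1 ≤ max a b := le_trans ha (le_max_left _ _)
  have hm : 1 ≤ min a b := le_min ha hb
  set M := max a b with hMdef
  set m := min a b with hmdef
  have heven : (M + 1) * (M + 2 * m) % 2 = 0 := by
    rcases Nat.even_or_odd M with he | ho
    · obtain ⟨r, hr⟩ := he
      have h2 : (M + 2*m) = 2 * (r + m) := by omega
      rw [h2, Nat.mul_comm (M+1), Nat.mul_assoc]
      omega
    · obtain ⟨r, hr⟩ := ho
      have h2 : (M + 1) = 2 * (r + 1) := by omega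
      rw [h2, Nat.mul_assoc]
      omega
  have hge : 2 * 3 ≤ (M + 1) * (M + 2 * m) := Nat.mul_le_mul (by omega) (by omega)
  have hE : E a b = (M + 1) * (M + 2 * m) / 2 - 1 := by
    rw [E, if_neg (by omega)]
  omega

lemma E_symm (a b : ℕ) : E a b = E b a := by
  simp [E, Nat.max_comm, Nat.min_comm, or_comm]

lemma E_step (a b : ℕ) :
    E a (b + 1) + (max (a + 1) (b + 1) + 1) ≤ E (a + 1) (b + 1) := by
  rcases Nat.eq_zero_or_pos a with rfl | ha
  · show E 0 (b+1) + (max 1 (b+1) + 1) ≤ E 1 (b+1)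
    have h0 : E 0 (b+1) = 0 := by simp [E]
    have h1 := E_eq (a := 1) (b := b + 1) le_rfl (by omega)
    have hmax : max 1 (b+1) = b + 1 := by omega
    have hmin : min 1 (b+1) = 1 := by omega
    rw [hmax, hmin] at h1
    rw [h0, hmax]
    have haux : 2 * b + 6 ≤ (b + 1 + 1) * (b + 1 + 2 * 1) := by nlinarith
    omega
  · have h1 := E_eq (a := a) (b := b + 1) ha (by omega)
    have h2 := E_eq (a := a + 1) (b := b + 1) (by omega) (by omega)
    rcases le_or_gt a b with hab | hab
    · have e1 : max a (b+1) = b + 1 := by omega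
      have e2 : min a (b+1) = a := by omega
      have e3 : max (a+1) (b+1) = b + 1 := by omega
      have e4 : min (a+1) (b+1) = a + 1 := by omega
      rw [e1, e2] at h1; rw [e3, e4] at h2; rw [e3]
      nlinarith
    · have e1 : max a (b+1) = a := by omega
      have e2 : min a (b+1) = b + 1 := by omega
      have e3 : max (a+1) (b+1) = a + 1 := by omega
      have e4 : min (a+1) (b+1) = b + 1 := by omega
      rw [e1, e2] at h1; rw [e3, e4] at h2; rw [e3]
      nlinarith

lemma E_step' (a b : ℕ) :
    E (a + 1) b + (max (a + 1) (b + 1) + 1) ≤ E (a + 1) (b + 1) := by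
  rw [E_symm (a+1) b, E_symm (a+1) (b+1), Nat.max_comm]
  exact E_step b a

lemma E_le {a b h : ℕ} (ha : a ≤ h) (hb : b ≤ h) : E a b ≤ 2 * h ^ 2 := by
  rcases Nat.eq_zero_or_pos a with rfl | ha1
  · simp [E]
  rcases Nat.eq_zero_or_pos b with rfl | hb1
  · simp [E]
  have h1 := E_eq ha1 hb1
  have hub : (max a b + 1) * (max a b + 2 * min a b) ≤ (h+1) * (3*h) :=
    Nat.mul_le_mul (by omega) (by omega)
  have hh : 1 ≤ h := le_trans ha1 ha
  rcases Nat.lt_or_ge h 2 with h2 | h2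
  · interval_cases h
    interval_cases a
    interval_cases b
    simp [E]
  · have : (h+1) * (3*h) ≤ 4 * h^2 + 2 := by nlinarith
    omega



lemma weier {ι : Type*} (s : Finset ι) (f : ι → ℝ) (h0 : ∀ i ∈ s, 0 ≤ f i)
    (h1 : ∀ i ∈ s, f i ≤ 1) : 1 - ∑ i ∈ s, f i ≤ ∏ i ∈ s, (1 - f i) := by
  classical
  induction s using Finset.cons_induction with
  | empty => simp
  | cons a s ha ih =>
    rw [Finset.sum_cons, Finset.prod_cons]
    have hfa0 : 0 ≤ f a := h0 a (Finset.mem_cons_self a s)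
    have hfa1 : f a ≤ 1 := h1 a (Finset.mem_cons_self a s)
    have ih' := ih (fun i hi => h0 i (Finset.mem_cons_of_mem hi))
      (fun i hi => h1 i (Finset.mem_cons_of_mem hi))
    have hs0 : 0 ≤ ∑ i ∈ s, f i := Finset.sum_nonneg fun i hi => h0 i (Finset.mem_cons_of_mem hi)
    nlinarith

lemma two_pow_ge (t : ℕ) : t * t + 2 * t ≤ 2 ^ (t + 1) := by
  induction t with
  | zero => simp
  | succ t ih =>
    rcases Nat.lt_or_ge t 3 with ht | ht
    · interval_cases t <;> simp [pow_succ]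
    · have : 2 ^ (t + 2) = 2 * 2 ^ (t+1) := by ring
      nlinarith

lemma two_pow_ge' (t : ℕ) : 2 * t + 2 ≤ 2 ^ (t + 1) := by
  have h := Nat.lt_two_pow_self (n := t)
  have : 2 ^ (t+1) = 2 * 2 ^ t := by ring
  omega

lemma gauss (t : ℕ) : (∑ i ∈ Finset.range t, ((i:ℝ)+1)) * 2 = t * (t+1) := by
  induction t with
  | zero => simp
  | succ s ihs =>
    rw [Finset.sum_range_succ, add_mul, ihs]
    push_cast
    ring

/-- The key analytic lemma. -/
lemma AL {t m q : ℕ} (h1 : 2 ^ (t + 1) ≤ m + 1) (h2 : m ≤ 2 * q + 1) :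
    (m.descFactorial t : ℝ) ≤ 2 ^ (t + 1) * (q.descFactorial t : ℝ) := by
  rcases Nat.eq_zero_or_pos t with rfl | ht
  · simp
  have hm1 : 2 * t + 1 ≤ m := by have := two_pow_ge' t; omega
  have hq : t ≤ q := by
    have ha := Nat.lt_two_pow_self (n := t)
    have hb : 2 ^ (t+1) = 2 * 2 ^ t := by ring
    omega
  have hm2 : t * t + 2 * t ≤ m + 1 := le_trans (two_pow_ge t) h1
  -- cast descFactorials to real products
  have hcastm : (m.descFactorial t : ℝ) = ∏ i ∈ Finset.range t, ((m : ℝ) - i) := by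
    rw [Nat.descFactorial_eq_prod_range, Nat.cast_prod]
    refine Finset.prod_congr rfl fun i hi => ?_
    rw [Finset.mem_range] at hi
    have : i ≤ m := by omega
    push_cast [this]; ring
  have hcastq : (q.descFactorial t : ℝ) = ∏ i ∈ Finset.range t, ((q : ℝ) - i) := by
    rw [Nat.descFactorial_eq_prod_range, Nat.cast_prod]
    refine Finset.prod_congr rfl fun i hi => ?_
    rw [Finset.mem_range] at hi
    have : i ≤ q := by omega
    push_cast [this]; ring
  rw [hcastm, hcastq]
  set A := ∏ i ∈ Finset.range t, ((m : ℝ) - i) with hA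
  set Q := ∏ i ∈ Finset.range t, ((q : ℝ) - i) with hQ
  set D := ∏ i ∈ Finset.range t, ((m : ℝ) - 1 - 2 * i) with hD
  have hfacpos : ∀ i ∈ Finset.range t, (0:ℝ) ≤ (m : ℝ) - 1 - 2 * i := by
    intro i hi
    rw [Finset.mem_range] at hi
    have : (i : ℝ) ≤ (t:ℝ) - 1 := by
      have : (i:ℝ) + 1 ≤ t := by exact_mod_cast hi
      linarith
    have hmr : (2*t + 1 : ℝ) ≤ m := by exact_mod_cast hm1
    linarith
  have step1 : D ≤ 2 ^ t * Q := by
    have : D ≤ ∏ i ∈ Finset.range t, (2 * ((q:ℝ) - i)) := by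
      refine Finset.prod_le_prod hfacpos fun i hi => ?_
      have hmr : (m : ℝ) ≤ 2 * q + 1 := by exact_mod_cast h2
      linarith
    calc D ≤ ∏ i ∈ Finset.range t, (2 * ((q:ℝ) - i)) := this
      _ = 2 ^ t * Q := by rw [Finset.prod_mul_distrib, Finset.prod_const, Finset.card_range]
  have hApos : ∀ i ∈ Finset.range t, (0:ℝ) ≤ (m:ℝ) - i := by
    intro i hi
    have := hfacpos i hi
    linarith
  have step2 : A ≤ 2 * D := by
    -- D = A * P with P = prod (1 - eps i)
    have hne : ∀ i ∈ Finset.range t, ((m:ℝ) - i) ≠ 0 := by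
      intro i hi
      have h0 := hfacpos i hi
      intro hz
      have h3 : (0:ℝ) ≤ (i:ℝ) := Nat.cast_nonneg i
      linarith
    have hDfac : D = A * ∏ i ∈ Finset.range t, (1 - ((i:ℝ)+1)/((m:ℝ) - i)) := by
      rw [hA, hD, ← Finset.prod_mul_distrib]
      refine Finset.prod_congr rfl fun i hi => ?_
      have hne' := hne i hi
      field_simp
      ring
    have hepsle : ∀ i ∈ Finset.range t, ((i:ℝ)+1)/((m:ℝ) - i) ≤ ((i:ℝ)+1)/((m:ℝ) - t + 1) := by
      intro i hi
      rw [Finset.mem_range] at hi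
      have hir : (i:ℝ) + 1 ≤ t := by exact_mod_cast hi
      have hmr : (2*t + 1 : ℝ) ≤ m := by exact_mod_cast hm1
      have htr : (1:ℝ) ≤ t := by exact_mod_cast ht
      apply div_le_div_of_nonneg_left (by linarith) (by linarith) (by linarith)
    have hdenpos : (0:ℝ) < (m:ℝ) - t + 1 := by
      have hmr : (2*t + 1 : ℝ) ≤ m := by exact_mod_cast hm1
      have htr : (1:ℝ) ≤ t := by exact_mod_cast ht
      linarith
    have hsle : ∑ i ∈ Finset.range t, ((i:ℝ)+1)/((m:ℝ) - i) ≤ 1/2 := by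
      calc ∑ i ∈ Finset.range t, ((i:ℝ)+1)/((m:ℝ) - i)
          ≤ ∑ i ∈ Finset.range t, ((i:ℝ)+1)/((m:ℝ) - t + 1) := Finset.sum_le_sum hepsle
        _ = (∑ i ∈ Finset.range t, ((i:ℝ)+1))/((m:ℝ) - t + 1) := by rw [Finset.sum_div]
        _ ≤ 1/2 := by
            rw [div_le_div_iff₀ hdenpos (by norm_num : (0:ℝ) < 2)]
            have hg := gauss t
            have hmr : (t*t + 2*t : ℝ) ≤ (m:ℝ) + 1 := by exact_mod_cast hm2
            nlinarith
    have heps0 : ∀ i ∈ Finset.range t, (0:ℝ) ≤ ((i:ℝ)+1)/((m:ℝ) - i) := by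
      intro i hi
      apply div_nonneg (by positivity) (hApos i hi)
    have heps1 : ∀ i ∈ Finset.range t, ((i:ℝ)+1)/((m:ℝ) - i) ≤ 1 := by
      intro i hi
      have h0 := hfacpos i hi
      have h3 : (0:ℝ) ≤ (i:ℝ) := Nat.cast_nonneg i
      rw [div_le_one (by linarith)]
      linarith
    have hW := weier (Finset.range t) (fun i => ((i:ℝ)+1)/((m:ℝ) - i)) heps0 heps1
    have hPhalf : (1/2 : ℝ) ≤ ∏ i ∈ Finset.range t, (1 - ((i:ℝ)+1)/((m:ℝ) - i)) := by
      refine le_trans ?_ hW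
      linarith
    have hAnn : (0:ℝ) ≤ A := Finset.prod_nonneg hApos
    nlinarith [hDfac, hPhalf, hAnn]
  calc A ≤ 2 * D := step2
    _ ≤ 2 * (2^t * Q) := by linarith [step1]
    _ = 2 ^ (t+1) * Q := by ring


variable {n : ℕ} (χ : Sym2 (Fin n) → Fin 2)

open Classical in
/-- labeled `col`-monochromatic cliques of size `a` inside `S` -/
noncomputable def cset (a : ℕ) (col : Fin 2) (S : Finset (Fin n)) : Finset (Fin a → Fin n) :=
  Finset.univ.filter (fun f => Function.Injective f ∧ (∀ v, f v ∈ S) ∧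
    ∀ v w : Fin a, v ≠ w → χ s(f v, f w) = col)

lemma mem_cset {a : ℕ} {col : Fin 2} {S : Finset (Fin n)} {f : Fin a → Fin n} :
    f ∈ cset χ a col S ↔ Function.Injective f ∧ (∀ v, f v ∈ S) ∧
      ∀ v w : Fin a, v ≠ w → χ s(f v, f w) = col := by
  classical
  simp [cset]

lemma cset_mono {a : ℕ} {col : Fin 2} {S T : Finset (Fin n)} (h : S ⊆ T) :
    cset χ a col S ⊆ cset χ a col T := by
  intro f hf
  rw [mem_cset] at hf ⊢
  exact ⟨hf.1, fun v => h (hf.2.1 v), hf.2.2⟩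

lemma cset_zero (col : Fin 2) (S : Finset (Fin n)) : (cset χ 0 col S).card = 1 := by
  have : cset χ 0 col S = {fun i => i.elim0} := by
    apply Finset.eq_singleton_iff_unique_mem.mpr
    constructor
    · rw [mem_cset]
      exact ⟨Function.injective_of_subsingleton _, fun v => v.elim0, fun v => v.elim0⟩
    · intro f _
      exact Subsingleton.elim _ _
  rw [this, Finset.card_singleton]

/-- the `col`-neighborhood of `v` inside `S` -/
noncomputable def nbr (col : Fin 2) (v : Fin n) (S : Finset (Fin n)) : Finset (Fin n) :=
  S.filter (fun w => w ≠ v ∧ χ s(v, w) = col)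

lemma fin2_cases {c0 c1 : Fin 2} (h : c0 ≠ c1) (c : Fin 2) : c = c0 ∨ c = c1 := by
  have h0 := c.isLt
  have h1 := c0.isLt
  have h2 := c1.isLt
  have h3 : c0.val ≠ c1.val := fun hv => h (Fin.ext hv)
  rcases (by omega : c.val = c0.val ∨ c.val = c1.val) with hv | hv
  · exact Or.inl (Fin.ext hv)
  · exact Or.inr (Fin.ext hv)

lemma nbr_card {c0 c1 : Fin 2} (h : c0 ≠ c1) {v : Fin n} {S : Finset (Fin n)} (hv : v ∈ S) :
    (nbr χ c0 v S).card + (nbr χ c1 v S).card = S.card - 1 := by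
  classical
  have hdisj : Disjoint (nbr χ c0 v S) (nbr χ c1 v S) := by
    rw [Finset.disjoint_left]
    intro w hw0 hw1
    rw [nbr, Finset.mem_filter] at hw0 hw1
    exact h (hw0.2.2 ▸ hw1.2.2 ▸ rfl)
  have hunion : nbr χ c0 v S ∪ nbr χ c1 v S = S.erase v := by
    ext w
    rw [nbr, nbr, Finset.mem_union, Finset.mem_filter, Finset.mem_filter, Finset.mem_erase]
    constructor
    · rintro (⟨hw, hne, _⟩ | ⟨hw, hne, _⟩) <;> exact ⟨hne, hw⟩
    · rintro ⟨hne, hw⟩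
      rcases fin2_cases h (χ s(v, w)) with hc | hc
      · exact Or.inl ⟨hw, hne, hc⟩
      · exact Or.inr ⟨hw, hne, hc⟩
  rw [← Finset.card_union_of_disjoint hdisj, hunion, Finset.card_erase_of_mem hv]

lemma nbr_subset (col : Fin 2) (v : Fin n) (S : Finset (Fin n)) : nbr χ col v S ⊆ S :=
  Finset.filter_subset _ _

/-- extend a tuple by a new first coordinate -/
def extend (a : ℕ) (v : Fin n) (f : Fin a → Fin n) : Fin (a + 1) → Fin n :=
  @Fin.cons a (fun _ => Fin n) v f

lemma extend_injective (a : ℕ) (v : Fin n) : Function.Injective (extend a v) := by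
  intro f g hfg
  exact Fin.cons_right_injective (α := fun _ : Fin (a+1) => Fin n) v hfg

lemma extend_zero (a : ℕ) (v : Fin n) (f : Fin a → Fin n) : extend a v f 0 = v :=
  Fin.cons_zero _ _

lemma extend_succ (a : ℕ) (v : Fin n) (f : Fin a → Fin n) (i : Fin a) :
    extend a v f i.succ = f i :=
  Fin.cons_succ _ _ _

/-- decomposition: summing cliques over first vertex -/
lemma decomp (a : ℕ) (col : Fin 2) (S T : Finset (Fin n)) (hT : T ⊆ S) :
    ∑ v ∈ T, ((cset χ a col (nbr χ col v S)).card) ≤ (cset χ (a + 1) col S).card := by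
  classical
  have hcard : ∀ v : Fin n,
      ((cset χ a col (nbr χ col v S)).image (extend a v)).card
        = (cset χ a col (nbr χ col v S)).card :=
    fun v => Finset.card_image_of_injective _ (extend_injective a v)
  have hsub : T.biUnion (fun v => (cset χ a col (nbr χ col v S)).image (extend a v))
      ⊆ cset χ (a + 1) col S := by
    intro g hg
    rw [Finset.mem_biUnion] at hg
    obtain ⟨v, hvT, hg⟩ := hg
    rw [Finset.mem_image] at hg
    obtain ⟨f, hf, rfl⟩ := hg
    rw [mem_cset] at hf ⊢
    obtain ⟨hinj, hmem, hcol⟩ := hf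
    have hfv : ∀ w, f w ≠ v ∧ χ s(v, f w) = col := by
      intro w
      have := hmem w
      rw [nbr, Finset.mem_filter] at this
      exact this.2
    refine ⟨?_, ?_, ?_⟩
    · show Function.Injective (extend a v f)
      rw [extend]
      apply Fin.cons_injective_of_injective ?_ hinj
      rintro ⟨w, hw⟩
      exact (hfv w).1 hw
    · intro i
      induction i using Fin.cases with
      | zero => rw [show extend a v f 0 = v from extend_zero a v f]; exact hT hvT
      | succ i => rw [extend_succ]; exact nbr_subset χ col v S (hmem i)
    · intro i j hij
      induction i using Fin.cases with
      | zero =>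
        induction j using Fin.cases with
        | zero => exact absurd rfl hij
        | succ j => rw [extend_zero, extend_succ]; exact (hfv j).2
      | succ i =>
        induction j using Fin.cases with
        | zero =>
          rw [extend_zero, extend_succ, Sym2.eq_swap]
          exact (hfv i).2
        | succ j =>
          rw [extend_succ, extend_succ]
          exact hcol i j (fun hh => hij (hh ▸ rfl))
  have hdisj : ∀ v₁ ∈ T, ∀ v₂ ∈ T, v₁ ≠ v₂ →
      Disjoint ((cset χ a col (nbr χ col v₁ S)).image (extend a v₁))
        ((cset χ a col (nbr χ col v₂ S)).image (extend a v₂)) := by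
    intro v₁ _ v₂ _ hne
    rw [Finset.disjoint_left]
    intro g hg1 hg2
    rw [Finset.mem_image] at hg1 hg2
    obtain ⟨f1, _, hgf1⟩ := hg1
    obtain ⟨f2, _, hgf2⟩ := hg2
    apply hne
    have h1 : g 0 = v₁ := by rw [← hgf1, extend_zero]
    have h2 : g 0 = v₂ := by rw [← hgf2, extend_zero]
    rw [← h1, h2]
  calc ∑ v ∈ T, (cset χ a col (nbr χ col v S)).card
      = ∑ v ∈ T, ((cset χ a col (nbr χ col v S)).image (extend a v)).card := by
        exact (Finset.sum_congr rfl fun v _ => (hcard v).symm)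
    _ = (T.biUnion (fun v => (cset χ a col (nbr χ col v S)).image (extend a v))).card :=
        (Finset.card_biUnion hdisj).symm
    _ ≤ (cset χ (a + 1) col S).card := Finset.card_le_card hsub



/-- The main counting lemma: step case. -/
lemma step (k : ℕ)
    (IH : ∀ a b : ℕ, ∀ c0 c1 : Fin 2, c0 ≠ c1 → a + b ≤ k → ∀ S : Finset (Fin n),
      2 ^ (a + b) ≤ S.card + 1 →
      ((S.card.descFactorial a : ℝ) ≤ 2 ^ (E a b) * ((cset χ a c0 S).card : ℝ) ∨
       (S.card.descFactorial b : ℝ) ≤ 2 ^ (E a b) * ((cset χ b c1 S).card : ℝ)))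
    (a' b : ℕ) (hb : 1 ≤ b) (c0 c1 : Fin 2) (hcc : c0 ≠ c1) (hk : a' + b ≤ k)
    (S : Finset (Fin n)) (hS : 2 ^ (a' + 1 + b) ≤ S.card + 1)
    (hmaj : S.card ≤ 2 * (S.filter
      (fun v => (nbr χ c1 v S).card ≤ (nbr χ c0 v S).card)).card) :
    (S.card.descFactorial (a' + 1) : ℝ) ≤ 2 ^ (E (a' + 1) b) * ((cset χ (a' + 1) c0 S).card : ℝ) ∨
    (S.card.descFactorial b : ℝ) ≤ 2 ^ (E (a' + 1) b) * ((cset χ b c1 S).card : ℝ) := by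
  classical
  set T := S.filter (fun v => (nbr χ c1 v S).card ≤ (nbr χ c0 v S).card) with hTdef
  set m := S.card with hm
  -- basic facts about members of T
  have hTS : T ⊆ S := Finset.filter_subset _ _
  have hRv : ∀ v ∈ T, m ≤ 2 * (nbr χ c0 v S).card + 1 := by
    intro v hv
    rw [hTdef, Finset.mem_filter] at hv
    have := nbr_card χ hcc hv.1
    have hm1 : 1 ≤ m := Finset.card_pos.mpr ⟨v, hv.1⟩
    omega
  have hm2 : 2 ^ (a' + 1 + b) ≤ m + 1 := hS
  have hm1 : 1 ≤ m := by
    have : (2:ℕ) ≤ 2 ^ (a' + 1 + b) := by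
      calc (2:ℕ) = 2^1 := by norm_num
      _ ≤ 2 ^ (a' + 1 + b) := Nat.pow_le_pow_right (by norm_num) (by omega)
    omega
  have hSv : ∀ v ∈ T, 2 ^ (a' + b) ≤ (nbr χ c0 v S).card + 1 := by
    intro v hv
    have h1 := hRv v hv
    have h2 : 2 ^ (a' + 1 + b) = 2 * 2 ^ (a' + b) := by ring
    omega
  -- exponent facts
  have hEst : E a' b + (max (a' + 1) b + 1) ≤ E (a' + 1) b := by
    obtain ⟨b', rfl⟩ : ∃ b', b = b' + 1 := ⟨b - 1, by omega⟩
    exact E_step a' b'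
  by_cases hex : ∃ v ∈ T,
      (((nbr χ c0 v S).card.descFactorial b : ℝ) ≤
        2 ^ (E a' b) * ((cset χ b c1 (nbr χ c0 v S)).card : ℝ))
  · -- blue output
    right
    obtain ⟨v, hvT, hvle⟩ := hex
    set R := nbr χ c0 v S with hR
    have hAL : ((m.descFactorial b : ℝ)) ≤ 2 ^ (b+1) * ((R.card.descFactorial b : ℝ)) := by
      apply AL ?_ (hRv v hvT)
      calc 2 ^ (b + 1) ≤ 2 ^ (a' + 1 + b) := Nat.pow_le_pow_right (by norm_num) (by omega)
        _ ≤ m + 1 := hm2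
    have hmono : ((cset χ b c1 R).card : ℝ) ≤ ((cset χ b c1 S).card : ℝ) := by
      exact_mod_cast Finset.card_le_card (cset_mono χ (nbr_subset χ c0 v S))
    have hexp : (2:ℝ) ^ (b + 1) * 2 ^ (E a' b) ≤ 2 ^ (E (a' + 1) b) := by
      rw [← pow_add]
      apply pow_le_pow_right₀ (by norm_num)
      have : b ≤ max (a' + 1) b := le_max_right _ _
      omega
    calc (m.descFactorial b : ℝ) ≤ 2 ^ (b+1) * ((R.card.descFactorial b : ℝ)) := hAL
      _ ≤ 2 ^ (b+1) * (2 ^ (E a' b) * ((cset χ b c1 R).card : ℝ)) := by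
          apply mul_le_mul_of_nonneg_left hvle (by positivity)
      _ ≤ 2 ^ (b+1) * (2 ^ (E a' b) * ((cset χ b c1 S).card : ℝ)) := by
          apply mul_le_mul_of_nonneg_left ?_ (by positivity)
          apply mul_le_mul_of_nonneg_left hmono (by positivity)
      _ = (2 ^ (b+1) * 2 ^ (E a' b)) * ((cset χ b c1 S).card : ℝ) := by ring
      _ ≤ 2 ^ (E (a' + 1) b) * ((cset χ b c1 S).card : ℝ) := by
          apply mul_le_mul_of_nonneg_right hexp (by positivity)
  · -- red output
    left
    push_neg at hex
    have hred : ∀ v ∈ T, ((nbr χ c0 v S).card.descFactorial a' : ℝ) ≤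
        2 ^ (E a' b) * ((cset χ a' c0 (nbr χ c0 v S)).card : ℝ) := by
      intro v hv
      rcases IH a' b c0 c1 hcc hk (nbr χ c0 v S) (hSv v hv) with h | h
      · exact h
      · exact absurd h (not_le.mpr (hex v hv))
    -- descFactorial of m in terms of m - 1
    obtain ⟨m'', hm''⟩ : ∃ m'', m = m'' + 1 := ⟨m - 1, by omega⟩
    set q : ℕ := m'' / 2 with hq
    have hALq : ((m''.descFactorial a' : ℝ)) ≤ 2 ^ (a' + 1) * ((q.descFactorial a' : ℝ)) := by
      apply AL ?_ (by omega)
      have h2 : 2 ^ (a' + 1 + b) = 2 ^ (a' + 1) * 2 ^ b := by ring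
      have h3 : 2 ^ 1 ≤ 2 ^ b := Nat.pow_le_pow_right (by norm_num) hb
      have h4 : 2 ^ (a' + 1) * 2 ≤ m + 1 := by
        calc 2 ^ (a' + 1) * 2 ≤ 2 ^ (a' + 1) * 2 ^ b := by
              apply Nat.mul_le_mul_left
              omega
          _ ≤ m + 1 := by rw [← h2]; exact hm2
      omega
    have hqr : ∀ v ∈ T, q ≤ (nbr χ c0 v S).card := by
      intro v hv
      have := hRv v hv
      omega
    -- sum bound
    have hsum := decomp χ a' c0 S T hTS
    have hsumR : (T.card : ℝ) * (q.descFactorial a' : ℝ) ≤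
        2 ^ (E a' b) * ((cset χ (a' + 1) c0 S).card : ℝ) := by
      have h1 : (T.card : ℝ) * (q.descFactorial a' : ℝ) =
          ∑ v ∈ T, (q.descFactorial a' : ℝ) := by
        rw [Finset.sum_const, nsmul_eq_mul]
      rw [h1]
      calc ∑ v ∈ T, (q.descFactorial a' : ℝ)
          ≤ ∑ v ∈ T, ((nbr χ c0 v S).card.descFactorial a' : ℝ) := by
            apply Finset.sum_le_sum
            intro v hv
            exact_mod_cast Nat.descFactorial_le a' (hqr v hv)
        _ ≤ ∑ v ∈ T, 2 ^ (E a' b) * ((cset χ a' c0 (nbr χ c0 v S)).card : ℝ) :=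
            Finset.sum_le_sum hred
        _ = 2 ^ (E a' b) * ∑ v ∈ T, ((cset χ a' c0 (nbr χ c0 v S)).card : ℝ) := by
            rw [Finset.mul_sum]
        _ ≤ 2 ^ (E a' b) * ((cset χ (a' + 1) c0 S).card : ℝ) := by
            apply mul_le_mul_of_nonneg_left ?_ (by positivity)
            exact_mod_cast hsum
    have hexp : (2:ℝ) ^ (a' + 2) * 2 ^ (E a' b) ≤ 2 ^ (E (a' + 1) b) := by
      rw [← pow_add]
      apply pow_le_pow_right₀ (by norm_num)
      have : a' + 1 ≤ max (a' + 1) b := le_max_left _ _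
      omega
    have hmT : (m : ℝ) ≤ 2 * (T.card : ℝ) := by exact_mod_cast hmaj
    have hdfnn : (0:ℝ) ≤ (m''.descFactorial a' : ℝ) := by positivity
    have hqnn : (0:ℝ) ≤ (q.descFactorial a' : ℝ) := by positivity
    have hstep1 : (m.descFactorial (a' + 1) : ℝ) = (m : ℝ) * (m''.descFactorial a' : ℝ) := by
      rw [hm'', Nat.succ_descFactorial_succ]
      push_cast
      ring
    calc (m.descFactorial (a' + 1) : ℝ)
        = (m : ℝ) * (m''.descFactorial a' : ℝ) := hstep1
      _ ≤ (2 * (T.card : ℝ)) * (2 ^ (a' + 1) * (q.descFactorial a' : ℝ)) := by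
          apply mul_le_mul hmT hALq hdfnn (by positivity)
      _ = 2 ^ (a' + 2) * ((T.card : ℝ) * (q.descFactorial a' : ℝ)) := by ring
      _ ≤ 2 ^ (a' + 2) * (2 ^ (E a' b) * ((cset χ (a' + 1) c0 S).card : ℝ)) := by
          apply mul_le_mul_of_nonneg_left hsumR (by positivity)
      _ = (2 ^ (a' + 2) * 2 ^ (E a' b)) * ((cset χ (a' + 1) c0 S).card : ℝ) := by ring
      _ ≤ 2 ^ (E (a' + 1) b) * ((cset χ (a' + 1) c0 S).card : ℝ) := by
          apply mul_le_mul_of_nonneg_right hexp (by positivity)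

/-- The main counting lemma. -/
lemma main (k : ℕ) : ∀ a b : ℕ, ∀ c0 c1 : Fin 2, c0 ≠ c1 → a + b ≤ k → ∀ S : Finset (Fin n),
    2 ^ (a + b) ≤ S.card + 1 →
    ((S.card.descFactorial a : ℝ) ≤ 2 ^ (E a b) * ((cset χ a c0 S).card : ℝ) ∨
     (S.card.descFactorial b : ℝ) ≤ 2 ^ (E a b) * ((cset χ b c1 S).card : ℝ)) := by
  classical
  induction k with
  | zero =>
    intro a b c0 c1 hcc hab S hS
    obtain ⟨rfl, rfl⟩ : a = 0 ∧ b = 0 := by omega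
    left
    rw [cset_zero, Nat.descFactorial_zero]
    have : (1:ℝ) ≤ 2 ^ (E 0 0) := one_le_pow₀ (by norm_num)
    simpa using this
  | succ k ihk =>
    intro a b c0 c1 hcc hab S hS
    rcases Nat.eq_zero_or_pos a with rfl | ha
    · left
      rw [cset_zero, Nat.descFactorial_zero]
      have : (1:ℝ) ≤ 2 ^ (E 0 b) := one_le_pow₀ (by norm_num)
      simpa using this
    rcases Nat.eq_zero_or_pos b with rfl | hb
    · right
      rw [cset_zero, Nat.descFactorial_zero]
      have : (1:ℝ) ≤ 2 ^ (E a 0) := one_le_pow₀ (by norm_num)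
      simpa using this
    obtain ⟨a', rfl⟩ : ∃ a', a = a' + 1 := ⟨a - 1, by omega⟩
    obtain ⟨b', rfl⟩ : ∃ b', b = b' + 1 := ⟨b - 1, by omega⟩
    have hfilt := Finset.card_filter_add_card_filter_not (s := S)
      (p := fun v => (nbr χ c1 v S).card ≤ (nbr χ c0 v S).card)
    rcases le_or_gt S.card
        (2 * (S.filter (fun v => (nbr χ c1 v S).card ≤ (nbr χ c0 v S).card)).card)
      with hmaj | hmaj
    · exact step χ k ihk a' (b' + 1) (by omega) c0 c1 hcc (by omega) S hS hmaj
    · have hmaj' : S.card ≤ 2 * (S.filter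
          (fun v => (nbr χ c0 v S).card ≤ (nbr χ c1 v S).card)).card := by
        have hsub : (S.filter (fun v => ¬((nbr χ c1 v S).card ≤ (nbr χ c0 v S).card)))
            ⊆ S.filter (fun v => (nbr χ c0 v S).card ≤ (nbr χ c1 v S).card) := by
          apply Finset.monotone_filter_right
          intro v hv
          omega
        have := Finset.card_le_card hsub
        omega
      have hS' : 2 ^ (b' + 1 + (a' + 1)) ≤ S.card + 1 := by
        rw [show b' + 1 + (a' + 1) = a' + 1 + (b' + 1) from by omega]
        exact hS
      have hres := step χ k ihk b' (a' + 1) (by omega) c1 c0 hcc.symm (by omega) S hS' hmaj'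
      rw [E_symm (b' + 1) (a' + 1)] at hres
      exact hres.symm

end S6

-- bridging lemma: clique count is below the copy count of any graph
lemma cset_le_copies {n : ℕ} (χ : Sym2 (Fin n) → Fin 2) {a : ℕ} (H : SimpleGraph (Fin a))
    (col : Fin 2) :
    ((S6.cset χ a col Finset.univ).card : ℕ) ≤ colorCopiesIn H χ col Set.univ := by
  classical
  have hsub : (↑(S6.cset χ a col Finset.univ) : Set (Fin a → Fin n)) ⊆
      {f : Fin a → Fin n | Function.Injective f ∧ (∀ v, f v ∈ (Set.univ : Set (Fin n))) ∧
        ∀ v w, H.Adj v w → χ s(f v, f w) = col} := by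
    intro f hf
    rw [Finset.mem_coe, S6.mem_cset] at hf
    exact ⟨hf.1, fun v => Set.mem_univ _, fun v w hvw => hf.2.2 v w hvw.ne⟩
  have := Set.ncard_le_ncard hsub (Set.toFinite _)
  rwa [Set.ncard_coe_finset] at this

theorem statement6 (h h1 h2 : ℕ) (hh1 : h1 ≤ h) (hh2 : h2 ≤ h)
    (H1 : SimpleGraph (Fin h1)) (H2 : SimpleGraph (Fin h2))
    (n : ℕ) (hn : 4 ^ h ≤ n) (χ : Sym2 (Fin n) → Fin 2) :
    (4 : ℝ) ^ (-(h ^ 2 : ℤ)) * (n.descFactorial h1 : ℝ) ≤ (colorCopies H1 χ 0 : ℝ) ∨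
    (4 : ℝ) ^ (-(h ^ 2 : ℤ)) * (n.descFactorial h2 : ℝ) ≤ (colorCopies H2 χ 1 : ℝ) := by
  have hcard : (Finset.univ : Finset (Fin n)).card = n := by simp
  have hS : 2 ^ (h1 + h2) ≤ (Finset.univ : Finset (Fin n)).card + 1 := by
    rw [hcard]
    calc 2 ^ (h1 + h2) ≤ 2 ^ (2 * h) := Nat.pow_le_pow_right (by norm_num) (by omega)
      _ = 4 ^ h := by rw [Nat.pow_mul]
      _ ≤ n := hn
      _ ≤ n + 1 := Nat.le_succ n
  have hmain := S6.main χ (h1 + h2) h1 h2 0 1 (by decide) le_rfl Finset.univ hS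
  rw [hcard] at hmain
  have hE : S6.E h1 h2 ≤ 2 * h ^ 2 := S6.E_le hh1 hh2
  have hpow : (2:ℝ) ^ (S6.E h1 h2) ≤ (4:ℝ) ^ (h ^ 2) := by
    have : (4:ℝ) ^ (h ^ 2) = (2:ℝ) ^ (2 * h ^ 2) := by
      rw [show (4:ℝ) = 2 ^ 2 from by norm_num, ← pow_mul]
    rw [this]
    exact pow_le_pow_right₀ (by norm_num) hE
  have hneg : (4:ℝ) ^ (-(h ^ 2 : ℤ)) = ((4:ℝ) ^ (h ^ 2 : ℕ))⁻¹ := by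
    rw [zpow_neg]
    norm_cast
  have h4pos : (0:ℝ) < (4:ℝ) ^ (h ^ 2 : ℕ) := by positivity
  rcases hmain with hred | hblue
  · left
    have hc : ((S6.cset χ h1 0 Finset.univ).card : ℝ) ≤ (colorCopies H1 χ 0 : ℝ) := by
      exact_mod_cast cset_le_copies χ H1 0
    rw [hneg, inv_mul_le_iff₀ h4pos]
    calc (n.descFactorial h1 : ℝ)
        ≤ 2 ^ (S6.E h1 h2) * ((S6.cset χ h1 0 Finset.univ).card : ℝ) := hred
      _ ≤ (4:ℝ) ^ (h ^ 2) * (colorCopies H1 χ 0 : ℝ) := by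
          apply mul_le_mul hpow hc (by positivity) (by positivity)
  · right
    have hc : ((S6.cset χ h2 1 Finset.univ).card : ℝ) ≤ (colorCopies H2 χ 1 : ℝ) := by
      exact_mod_cast cset_le_copies χ H2 1
    rw [hneg, inv_mul_le_iff₀ h4pos]
    calc (n.descFactorial h2 : ℝ)
        ≤ 2 ^ (S6.E h1 h2) * ((S6.cset χ h2 1 Finset.univ).card : ℝ) := hblue
      _ ≤ (4:ℝ) ^ (h ^ 2) * (colorCopies H2 χ 1 : ℝ) := by
          apply mul_le_mul hpow hc (by positivity) (by positivity)
end

section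
/- Fix k ≥ 4, a k-critical graph H_0 with h vertices, and a graph H obtained from H_0 by adding t−h pendant edges, where t ≥ (1000kh)^{10}·h^{10k}. Set λ = 1/(2·10^8·h^4·k^4), τ = (1+λ)^{−t}, and d = (1+λ)n/(k−1). Let χ be a 2-coloring of E(K_n) with the minimum number of monochromatic labeled copies of H. Then for all sufficiently large n, the following holds: if S is a set of vertices of K_n each of which has at least d blue neighbors under χ, then the number of blue labeled copies of H_0 with image contained in S is less than τ·(n)_h. -/
open Filter

/-- The parameter `λ = 1/(2·10^8·h^4·k^4)`. -/
noncomputable def lamParam (h k : ℕ) : ℝ := 1 / (2 * 10 ^ 8 * (h : ℝ) ^ 4 * (k : ℝ) ^ 4)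

section Auxiliary

open Finset

set_option maxHeartbeats 1600000

lemma ncard_setOf_eq_card_filter {α : Type*} [Fintype α] (P : α → Prop) [DecidablePred P] :
    {x | P x}.ncard = (Finset.univ.filter P).card := by
  rw [Set.ncard_eq_toFinset_card', Set.toFinset_setOf]

lemma tc_eq_zero_iff {n k : ℕ} (i j : Fin n) :
    turanColoring n k s(i, j) = 0 ↔ (i : ℕ) % (k - 1) = (j : ℕ) % (k - 1) := by
  unfold turanColoring
  rw [Sym2.lift_mk]
  dsimp only
  split_ifs with hc <;> simp [hc]

lemma tc_eq_one_iff {n k : ℕ} (i j : Fin n) :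
    turanColoring n k s(i, j) = 1 ↔ ¬ ((i : ℕ) % (k - 1) = (j : ℕ) % (k - 1)) := by
  unfold turanColoring
  rw [Sym2.lift_mk]
  dsimp only
  split_ifs with hc <;> simp [hc]

lemma ext_card {β V : Type*} [Fintype β] [DecidableEq β] [Fintype V] [DecidableEq V]
    (B : Finset β) :
    ∀ (e₀ : β → V) (T : β → Finset V) (c : ℕ), (∀ v ∈ B, c + B.card ≤ (T v).card) →
      c ^ B.card ≤ Set.ncard {e : β → V | Set.InjOn e ↑B ∧ (∀ v ∈ B, e v ∈ T v) ∧
        ∀ v ∉ B, e v = e₀ v} := by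
  classical
  induction B using Finset.induction_on with
  | empty =>
    intro e₀ T c _
    have : {e : β → V | Set.InjOn e ↑(∅ : Finset β) ∧ (∀ v ∈ (∅ : Finset β), e v ∈ T v) ∧
        ∀ v ∉ (∅ : Finset β), e v = e₀ v} = {e₀} := by
      ext e
      simp only [Set.mem_setOf_eq, Set.mem_singleton_iff, Finset.notMem_empty]
      constructor
      · rintro ⟨-, -, h⟩; funext v; exact h v (by simp)
      · rintro rfl; refine ⟨by simp, by simp, fun v _ => rfl⟩
    rw [this, Set.ncard_singleton]
    simp
  | @insert a B ha ih =>
    intro e₀ T c hT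
    rw [ncard_setOf_eq_card_filter]
    have hmem : ∀ e ∈ Finset.univ.filter (fun e : β → V => Set.InjOn e ↑(insert a B) ∧
        (∀ v ∈ insert a B, e v ∈ T v) ∧ ∀ v ∉ insert a B, e v = e₀ v), e a ∈ T a := by
      intro e he
      simp only [Finset.mem_filter] at he
      exact he.2.2.1 a (Finset.mem_insert_self a B)
    rw [Finset.card_eq_sum_card_fiberwise (f := fun e : β → V => e a) (t := T a) hmem]
    have hfib : ∀ x ∈ T a, c ^ B.card ≤
        ((Finset.univ.filter (fun e : β → V => Set.InjOn e ↑(insert a B) ∧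
          (∀ v ∈ insert a B, e v ∈ T v) ∧ ∀ v ∉ insert a B, e v = e₀ v)).filter
          (fun e => e a = x)).card := by
      intro x hx
      have heq : (Finset.univ.filter (fun e : β → V => Set.InjOn e ↑(insert a B) ∧
          (∀ v ∈ insert a B, e v ∈ T v) ∧ ∀ v ∉ insert a B, e v = e₀ v)).filter
          (fun e => e a = x) =
          Finset.univ.filter (fun e : β → V => Set.InjOn e ↑B ∧
            (∀ v ∈ B, e v ∈ (T v).erase x) ∧ ∀ v ∉ B, e v = Function.update e₀ a x v) := by
        ext e
        simp only [Finset.mem_filter, Finset.mem_univ, true_and]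
        constructor
        · rintro ⟨⟨hinj, hTv, hout⟩, hax⟩
          refine ⟨hinj.mono (by simp [Finset.coe_subset, Finset.subset_insert]),
            fun v hv => ?_, fun v hv => ?_⟩
          · refine Finset.mem_erase.mpr ⟨?_, hTv v (Finset.mem_insert_of_mem hv)⟩
            intro hvx
            have : v = a := hinj (by simp [hv]) (by simp) (by rw [hvx, hax])
            exact ha (this ▸ hv)
          · by_cases hva : v = a
            · subst hva; rw [hax, Function.update_self]
            · rw [Function.update_of_ne hva]
              exact hout v (by simp [hva, hv])
        · rintro ⟨hinj, hTv, hout⟩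
          have hea : e a = x := by
            have := hout a ha; rwa [Function.update_self] at this
          refine ⟨⟨?_, fun v hv => ?_, fun v hv => ?_⟩, hea⟩
          · intro u hu v hv huv
            simp only [Finset.coe_insert, Set.mem_insert_iff, Finset.mem_coe] at hu hv
            rcases hu with rfl | hu <;> rcases hv with rfl | hv
            · rfl
            · exact absurd (by rw [← huv, hea]) (Finset.ne_of_mem_erase (hTv v hv))
            · exact absurd (by rw [huv, hea]) (Finset.ne_of_mem_erase (hTv u hu))
            · exact hinj hu hv huv
          · rcases Finset.mem_insert.mp hv with rfl | hv
            · rwa [hea]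
            · exact Finset.mem_of_mem_erase (hTv v hv)
          · have hva : v ≠ a := fun h => hv (h ▸ Finset.mem_insert_self a B)
            have := hout v (fun h => hv (Finset.mem_insert_of_mem h))
            rwa [Function.update_of_ne hva] at this
      rw [heq]
      have := ih (Function.update e₀ a x) (fun v => (T v).erase x) c (fun v hv => by
        have h1 := hT v (Finset.mem_insert_of_mem hv)
        have h2 : (T v).card - 1 ≤ ((T v).erase x).card := Finset.pred_card_le_card_erase
        rw [Finset.card_insert_of_notMem ha] at h1
        show c + B.card ≤ ((T v).erase x).card
        omega)
      rwa [ncard_setOf_eq_card_filter] at this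
    calc c ^ (insert a B).card = c * c ^ B.card := by
          rw [Finset.card_insert_of_notMem ha, pow_succ, mul_comm]
      _ ≤ (T a).card * c ^ B.card := by
          have := hT a (Finset.mem_insert_self a B); exact Nat.mul_le_mul_right _ (by omega)
      _ = ∑ _x ∈ T a, c ^ B.card := by rw [Finset.sum_const, smul_eq_mul]
      _ ≤ _ := Finset.sum_le_sum hfib

lemma analytic_ineq (lp : ℝ) (h t n m D q : ℕ) (hm3 : 3 ≤ m)
    (hh1 : 1 ≤ h) (hht : h ≤ t) (ht100 : 100 ≤ t)
    (hl0 : 0 < lp) (hl2 : (1 + lp) ^ h ≤ 2)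
    (hq : q = n / m + 1)
    (hD : (1 + lp) * n / m ≤ (D : ℝ))
    (hn : m * t ^ 3 + h * t ^ 2 ≤ n) :
    (n : ℝ) ^ (h - 1) * (q : ℝ) ^ (t - h + 1) <
      (1 + lp) ^ (-(t : ℤ)) * (n.descFactorial h : ℝ) * ((D - t : ℕ) : ℝ) ^ (t - h) := by
  have hmR : (3 : ℝ) ≤ (m : ℝ) := by exact_mod_cast hm3
  have hm0 : (0 : ℝ) < m := by linarith
  have htR : (100 : ℝ) ≤ (t : ℝ) := by exact_mod_cast ht100
  have ht0 : (0 : ℝ) < t := by linarith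
  have hnt : (m * t ^ 3 + h * t ^ 2 : ℝ) ≤ (n : ℝ) := by exact_mod_cast hn
  have hhR : (1 : ℝ) ≤ (h : ℝ) := by exact_mod_cast hh1
  have p1 : (0:ℝ) < (m:ℝ) * (t:ℝ) ^ 3 := by positivity
  have p2 : (0:ℝ) ≤ (h:ℝ) * (t:ℝ) ^ 2 := by positivity
  have hn0 : (0 : ℝ) < n := by linarith
  have hmt2 : (m:ℝ) * (t:ℝ) ^ 2 ≤ (m:ℝ) * (t:ℝ) ^ 3 := by
    nlinarith [mul_nonneg (mul_nonneg hm0.le (sq_nonneg (t:ℝ))) (by linarith : (0:ℝ) ≤ (t:ℝ) - 1)]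
  have hnmt3 : (m:ℝ) * (t:ℝ) ^ 3 ≤ (n:ℝ) := by linarith
  have hnht2 : (h:ℝ) * (t:ℝ) ^ 2 ≤ (n:ℝ) := by linarith
  have hnmt2 : (m:ℝ) * (t:ℝ) ^ 2 ≤ (n:ℝ) := by linarith
  set u : ℝ := 1 / (t : ℝ) ^ 2 with hu
  have hu0 : 0 < u := by positivity
  have hu1 : u ≤ 1 / 10000 := by
    rw [hu, div_le_div_iff₀ (by positivity) (by norm_num)]
    nlinarith [sq_nonneg ((t:ℝ) - 100)]
  -- (A) q bound
  have hqb : (q : ℝ) ≤ ((n:ℝ) / m) * (1 + u) := by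
    have h1 : ((n / m : ℕ) : ℝ) ≤ (n : ℝ) / m := Nat.cast_div_le
    have h2 : (1 : ℝ) ≤ ((n:ℝ) / m) * u := by
      rw [hu, div_mul_div_comm, mul_one, le_div_iff₀ (by positivity)]
      linarith
    have h3 : (q : ℝ) = ((n / m : ℕ) : ℝ) + 1 := by rw [hq]; push_cast; ring
    have h5 : ((n:ℝ)/m) * (1+u) = (n:ℝ)/m + ((n:ℝ)/m)*u := by ring
    linarith
  have hl1 : (0:ℝ) < 1 + lp := by linarith
  -- (B) D - t bound
  have hmt1 : (m:ℝ) * (t:ℝ) ≤ (m:ℝ) * (t:ℝ) ^ 3 := by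
    nlinarith [mul_nonneg (mul_nonneg hm0.le ht0.le) (by nlinarith : (0:ℝ) ≤ (t:ℝ)^2 - 1)]
  have htD : t ≤ D := by
    have h1 : (t : ℝ) ≤ (1 + lp) * n / m := by
      rw [le_div_iff₀ hm0]
      have e : (1+lp) * (n:ℝ) = (n:ℝ) + lp * n := by ring
      linarith [mul_nonneg hl0.le hn0.le]
    have := h1.trans hD
    exact_mod_cast this
  have hA : (t:ℝ) ≤ ((n:ℝ)/m) * u := by
    rw [hu, div_mul_div_comm, mul_one, le_div_iff₀ (by positivity)]
    linarith
  have hcb : ((1 + lp) * ((n:ℝ) / m)) * (1 - u) ≤ ((D - t : ℕ) : ℝ) := by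
    rw [Nat.cast_sub htD]
    have h1 : (t : ℝ) ≤ ((1 + lp) * ((n:ℝ) / m)) * u := by
      have e : ((1+lp) * ((n:ℝ)/m)) * u = ((n:ℝ)/m)*u + lp * (((n:ℝ)/m)*u) := by ring
      have e2 : (0:ℝ) ≤ lp * (((n:ℝ)/m)*u) :=
        mul_nonneg hl0.le (mul_nonneg (by positivity) hu0.le)
      linarith
    have hDd : (1 + lp) * ((n:ℝ) / m) ≤ (D : ℝ) := by rw [mul_div_assoc] at hD; exact hD
    have e3 : ((1+lp) * ((n:ℝ)/m)) * (1-u) = (1+lp) * ((n:ℝ)/m) - ((1+lp) * ((n:ℝ)/m)) * u := by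
      ring
    linarith
  -- (C) descFactorial bound
  have hhn : h ≤ n := by
    have ht2 : (1:ℝ) ≤ (t:ℝ)^2 := by nlinarith
    have e := mul_le_mul_of_nonneg_left ht2 (by positivity : (0:ℝ) ≤ (h:ℝ))
    rw [mul_one] at e
    have : (h:ℝ) ≤ n := by linarith
    exact_mod_cast this
  have hdF : ((n : ℝ) * (1 - u)) ^ h ≤ (n.descFactorial h : ℝ) := by
    have h1 : (n - h) ^ h ≤ n.descFactorial h := by
      calc (n - h) ^ h ≤ (n + 1 - h) ^ h := Nat.pow_le_pow_left (by omega) h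
        _ ≤ n.descFactorial h := Nat.pow_sub_le_descFactorial n h
    have h2 : (n : ℝ) * (1 - u) ≤ ((n - h : ℕ) : ℝ) := by
      rw [Nat.cast_sub hhn]
      have : (h : ℝ) ≤ (n : ℝ) * u := by
        rw [hu, mul_one_div, le_div_iff₀ (by positivity)]; linarith
      linarith
    calc ((n : ℝ) * (1 - u)) ^ h ≤ (((n - h : ℕ) : ℝ)) ^ h := by
          apply pow_le_pow_left₀ (mul_nonneg hn0.le (by linarith)) h2
      _ ≤ (n.descFactorial h : ℝ) := by exact_mod_cast h1
  have hC0 : 0 ≤ ((1 + lp) * ((n:ℝ) / m)) * (1 - u) := by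
    apply mul_nonneg (by positivity); linarith
  -- key numeric inequality
  have key : (n:ℝ) ^ (h-1) * (((n:ℝ) / m) * (1 + u)) ^ (t - h + 1) <
      (1 + lp) ^ (-(t : ℤ)) * ((n:ℝ) * (1 - u)) ^ h *
        (((1 + lp) * ((n:ℝ) / m)) * (1 - u)) ^ (t - h) := by
    have e1 : (n:ℝ) ^ (h-1) * (((n:ℝ) / m) * (1 + u)) ^ (t - h + 1)
        = (n:ℝ) ^ t * (1+u) ^ (t-h+1) / (m:ℝ) ^ (t-h+1) := by
      have hnn : (n:ℝ) ^ t = (n:ℝ) ^ (h-1) * (n:ℝ) ^ (t-h+1) := by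
        rw [← pow_add]; congr 1; omega
      rw [hnn, mul_pow, div_pow]; ring
    have e2 : (1 + lp) ^ (-(t : ℤ)) * ((n:ℝ) * (1 - u)) ^ h *
          (((1 + lp) * ((n:ℝ) / m)) * (1 - u)) ^ (t - h)
        = (n:ℝ) ^ t * (1-u) ^ t / ((1+lp) ^ h * (m:ℝ) ^ (t-h)) := by
      rw [zpow_neg, zpow_natCast]
      have hpn : (1+lp) ^ t = (1+lp) ^ (t-h) * (1+lp) ^ h := by rw [← pow_add]; congr 1; omega
      have hnn : (n:ℝ) ^ t = (n:ℝ) ^ (t-h) * (n:ℝ) ^ h := by rw [← pow_add]; congr 1; omega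
      have huu : (1-u) ^ t = (1-u) ^ (t-h) * (1-u) ^ h := by rw [← pow_add]; congr 1; omega
      rw [hpn, hnn, huu, mul_pow, mul_pow, mul_pow, div_pow]
      have q1 : ((1+lp) ^ (t-h) : ℝ) ≠ 0 := by positivity
      have q2 : ((1+lp) ^ h : ℝ) ≠ 0 := by positivity
      have q3 : ((m:ℝ) ^ (t-h)) ≠ 0 := by positivity
      field_simp
    rw [e1, e2, div_lt_div_iff₀ (by positivity) (by positivity)]
    rw [mul_assoc, mul_assoc]
    refine mul_lt_mul_of_pos_left ?_ (pow_pos hn0 t)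
    have hmp : (m:ℝ) ^ (t-h+1) = (m:ℝ) ^ (t-h) * m := by rw [pow_succ]
    have h1t : 1/(t:ℝ) ≤ 1/100 := by
      rw [div_le_div_iff₀ ht0 (by norm_num)]; linarith
    have h2t : 2/(t:ℝ) ≤ 1/50 := by
      rw [div_le_div_iff₀ ht0 (by norm_num)]; linarith
    have hQ0 : (0:ℝ) < 1 - 2/(t:ℝ) := by linarith
    have hfin : (1+u) ^ (t-h+1) * (1+lp) ^ h < (1-u) ^ t * m := by
      have hP : (1+u) ^ (t-h+1) ≤ (1+u) ^ (t+1) :=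
        pow_le_pow_right₀ (by linarith) (by omega)
      have hPQ : (1+u) ^ (t+1) * (1-u) ^ (t+1) ≤ 1 := by
        rw [← mul_pow]
        have e : (1+u)*(1-u) = 1 - u^2 := by ring
        rw [e]
        apply pow_le_one₀ (by nlinarith [sq_nonneg u]) (by nlinarith [sq_nonneg u])
      have hQ : 1 - 2/(t:ℝ) ≤ (1-u) ^ (t+1) := by
        have hb := one_add_mul_le_pow (a := -u) (by linarith) (t+1)
        have he : (1:ℝ) + ((t+1 : ℕ) : ℝ) * (-u) = 1 - ((t:ℝ)+1) * u := by push_cast; ring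
        rw [he] at hb
        have h2 : ((t:ℝ)+1) * u ≤ 2/(t:ℝ) := by
          rw [hu, mul_one_div, div_le_div_iff₀ (by positivity) ht0]
          nlinarith
        calc 1 - 2/(t:ℝ) ≤ 1 - ((t:ℝ)+1) * u := by linarith
          _ ≤ (1-u) ^ (t+1) := by
            have : ((1:ℝ) + -u) ^ (t+1) = (1-u) ^ (t+1) := by ring_nf
            rw [← this]; exact hb
      have hR : 1 - 1/(t:ℝ) ≤ (1-u) ^ t := by
        have hb := one_add_mul_le_pow (a := -u) (by linarith) t
        have he : (1:ℝ) + ((t : ℕ) : ℝ) * (-u) = 1 - (t:ℝ) * u := by push_cast; ring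
        rw [he] at hb
        have h2 : (t:ℝ) * u = 1/(t:ℝ) := by
          rw [hu, mul_one_div, pow_two, ← div_div, div_self ht0.ne']
        rw [h2] at hb
        calc 1 - 1/(t:ℝ) ≤ (1 + -u) ^ t := hb
          _ = (1-u) ^ t := by ring_nf
      have hPb : (1+u) ^ (t+1) ≤ 1 / (1 - 2/(t:ℝ)) := by
        rw [le_div_iff₀ hQ0]
        calc (1+u) ^ (t+1) * (1 - 2/(t:ℝ)) ≤ (1+u) ^ (t+1) * (1-u) ^ (t+1) := by
              apply mul_le_mul_of_nonneg_left hQ (by positivity)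
          _ ≤ 1 := hPQ
      have hA1 : (99:ℝ)/100 ≤ 1 - 1/(t:ℝ) := by linarith
      have hA2 : (49:ℝ)/50 ≤ 1 - 2/(t:ℝ) := by linarith
      have hp : (99:ℝ)/100 * (49/50) ≤ (1 - 1/(t:ℝ)) * (1 - 2/(t:ℝ)) :=
        mul_le_mul hA1 hA2 (by norm_num) (by linarith)
      have hmprod : (3:ℝ) * ((99:ℝ)/100 * (49/50)) ≤ (m:ℝ) * ((1 - 1/(t:ℝ)) * (1 - 2/(t:ℝ))) :=
        mul_le_mul hmR hp (by norm_num) (by linarith)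
      have hfin2 : (1 / (1 - 2/(t:ℝ))) * 2 < (1 - 1/(t:ℝ)) * m := by
        rw [div_mul_eq_mul_div, div_lt_iff₀ hQ0, one_mul]
        have e : (1 - 1/(t:ℝ)) * m * (1 - 2/(t:ℝ)) = (m:ℝ) * ((1 - 1/(t:ℝ)) * (1 - 2/(t:ℝ))) := by
          ring
        rw [e]
        linarith
      calc (1+u) ^ (t-h+1) * (1+lp) ^ h ≤ (1 / (1 - 2/(t:ℝ))) * 2 := by
            apply mul_le_mul (hP.trans hPb) hl2 (by positivity) (by positivity)
        _ < (1 - 1/(t:ℝ)) * m := hfin2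
        _ ≤ (1-u) ^ t * m := by
            apply mul_le_mul_of_nonneg_right hR (by linarith)
    calc (1+u) ^ (t-h+1) * ((1+lp) ^ h * (m:ℝ) ^ (t-h))
        = ((1+u) ^ (t-h+1) * (1+lp) ^ h) * (m:ℝ) ^ (t-h) := by ring
      _ < ((1-u) ^ t * m) * (m:ℝ) ^ (t-h) := by
          apply mul_lt_mul_of_pos_right hfin (by positivity)
      _ = (1-u) ^ t * (m:ℝ) ^ (t-h+1) := by rw [hmp]; ring
  -- combine monotonicity
  calc (n : ℝ) ^ (h - 1) * (q : ℝ) ^ (t - h + 1)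
      ≤ (n:ℝ) ^ (h-1) * (((n:ℝ) / m) * (1 + u)) ^ (t - h + 1) := by
        apply mul_le_mul_of_nonneg_left (pow_le_pow_left₀ (by positivity) hqb _) (by positivity)
    _ < (1 + lp) ^ (-(t : ℤ)) * ((n:ℝ) * (1 - u)) ^ h *
          (((1 + lp) * ((n:ℝ) / m)) * (1 - u)) ^ (t - h) := key
    _ ≤ (1 + lp) ^ (-(t : ℤ)) * (n.descFactorial h : ℝ) * ((D - t : ℕ) : ℝ) ^ (t - h) := by
        apply mul_le_mul
        · apply mul_le_mul_of_nonneg_left hdF (by positivity)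
        · exact pow_le_pow_left₀ hC0 hcb _
        · positivity
        · positivity

lemma red_upper {t n : ℕ} (m h q : ℕ) (hm : 0 < m) (hq : q = n / m + 1)
    (s : Finset (Fin t)) (hcard : s.card = h)
    (a₀ b₀ : Fin t) (ha₀ : a₀ ∈ s) (hb₀ : b₀ ∈ s) (hab : a₀ ≠ b₀)
    (att : Fin t → Fin t) (hatt : ∀ v, v ∉ s → att v ∈ s) :
    Set.ncard {f : Fin t → Fin n | ((f b₀ : ℕ) % m = (f a₀ : ℕ) % m) ∧
      ∀ v, v ∉ s → (f v : ℕ) % m = (f (att v) : ℕ) % m} ≤ n ^ (h - 1) * q ^ (t - h + 1) := by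
  classical
  have hq0 : 0 < q := by rw [hq]; exact Nat.succ_pos _
  set RS := {f : Fin t → Fin n | ((f b₀ : ℕ) % m = (f a₀ : ℕ) % m) ∧
      ∀ v, v ∉ s → (f v : ℕ) % m = (f (att v) : ℕ) % m} with hRS
  set E := s.erase b₀ with hE
  set I := insert b₀ sᶜ with hI
  have hlt : ∀ (f : Fin t → Fin n) (v : Fin t), (f v : ℕ) / m < q := by
    intro f v
    have h1 : (f v : ℕ) ≤ n := le_of_lt (f v).isLt
    have h2 : (f v : ℕ) / m ≤ n / m := Nat.div_le_div_right h1
    rw [hq]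
    exact Nat.lt_succ_of_le h2
  set Φ : RS → ({x // x ∈ E} → Fin n) × ({x // x ∈ I} → Fin q) :=
    fun f => (fun x => f.1 ↑x, fun v => ⟨(f.1 ↑v : ℕ) / m, hlt f.1 ↑v⟩) with hΦ
  -- auxiliary: the "mod determining" vertex
  have hmod : ∀ v ∈ I, ∃ z ∈ E, ∀ f ∈ RS, (f v : ℕ) % m = (f z : ℕ) % m := by
    intro v hv
    rcases Finset.mem_insert.mp hv with rfl | hv'
    · exact ⟨a₀, Finset.mem_erase.mpr ⟨hab, ha₀⟩, fun f hf => hf.1⟩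
    · have hvs : v ∉ s := Finset.mem_compl.mp hv'
      by_cases hzb : att v = b₀
      · refine ⟨a₀, Finset.mem_erase.mpr ⟨hab, ha₀⟩, fun f hf => ?_⟩
        have h1 := hf.2 v hvs
        rw [hzb] at h1
        rw [h1]
        exact hf.1
      · exact ⟨att v, Finset.mem_erase.mpr ⟨hzb, hatt v hvs⟩, fun f hf => hf.2 v hvs⟩
  have hinj : Function.Injective Φ := by
    rintro ⟨f, hf⟩ ⟨f', hf'⟩ hEq
    have h1 := congrArg Prod.fst hEq
    have h2 := congrArg Prod.snd hEq
    simp only [hΦ] at h1 h2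
    have feqE : ∀ z ∈ E, f z = f' z := by
      intro z hz
      exact congrFun h1 ⟨z, hz⟩
    have feqI : ∀ v ∈ I, f v = f' v := by
      intro v hv
      obtain ⟨z, hz, hzp⟩ := hmod v hv
      have hdiv : (f v : ℕ) / m = (f' v : ℕ) / m := by
        have := congrFun h2 ⟨v, hv⟩
        exact congrArg Fin.val this
      have hmodeq : (f v : ℕ) % m = (f' v : ℕ) % m := by
        rw [hzp f hf, hzp f' hf', feqE z hz]
      have : (f v : ℕ) = (f' v : ℕ) := by
        calc (f v : ℕ) = m * ((f v : ℕ) / m) + (f v : ℕ) % m := (Nat.div_add_mod _ _).symm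
          _ = m * ((f' v : ℕ) / m) + (f' v : ℕ) % m := by rw [hdiv, hmodeq]
          _ = (f' v : ℕ) := Nat.div_add_mod _ _
      exact Fin.ext this
    apply Subtype.ext
    funext v
    by_cases hvs : v ∈ s
    · by_cases hvb : v = b₀
      · exact feqI v (hvb ▸ Finset.mem_insert_self b₀ sᶜ)
      · exact feqE v (Finset.mem_erase.mpr ⟨hvb, hvs⟩)
    · exact feqI v (Finset.mem_insert_of_mem (Finset.mem_compl.mpr hvs))
  have hcount : Nat.card RS ≤ Fintype.card (({x // x ∈ E} → Fin n) × ({x // x ∈ I} → Fin q)) := by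
    rw [← Nat.card_eq_fintype_card]
    exact Nat.card_le_card_of_injective Φ hinj
  rw [← Nat.card_coe_set_eq]
  refine hcount.trans ?_
  rw [Fintype.card_prod, Fintype.card_fun, Fintype.card_fun, Fintype.card_coe, Fintype.card_coe,
    Fintype.card_fin, Fintype.card_fin]
  have hcE : E.card = h - 1 := by rw [hE, Finset.card_erase_of_mem hb₀, hcard]
  have hcI : I.card = t - h + 1 := by
    rw [hI, Finset.card_insert_of_notMem (by simp [hb₀]), Finset.card_compl, hcard,
      Fintype.card_fin]
  rw [hcE, hcI]

lemma blue_lower {t n : ℕ} (hn : 0 < n) (H : SimpleGraph (Fin t)) (s : Finset (Fin t))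
    (χ : Sym2 (Fin n) → Fin 2) (S : Set (Fin n)) (hpend : PendantOutside H s)
    (D c : ℕ) (hdeg : ∀ v ∈ S, D ≤ colorDeg χ 1 v)
    (hc : c + (t - s.card) + s.card ≤ D) :
    (colorCopiesIn (H.induce (s : Set (Fin t))) χ 1 S) * c ^ (t - s.card) ≤ monoCopies H χ := by
  classical
  set β := {x : Fin t // x ∈ sᶜ} with hβ
  -- pendant data
  have hpend' : ∀ x : β, ∃ w₀, w₀ ∈ s ∧ H.neighborSet ↑x = {w₀} := by
    intro x
    obtain ⟨w₀, hw₀, hnb⟩ := hpend ↑x (Finset.mem_compl.mp x.2)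
    exact ⟨w₀, hw₀, hnb⟩
  choose w hwmem hwnb using hpend'
  have hcardβ : (Finset.univ : Finset β).card = t - s.card := by
    rw [Finset.card_univ]
    simp [hβ, Finset.card_compl]
  -- Finset versions
  have hA : colorCopiesIn (H.induce (s : Set (Fin t))) χ 1 S =
      (Finset.univ.filter (fun g : ((s : Set (Fin t)) : Type) → Fin n =>
        Function.Injective g ∧ (∀ v, g v ∈ S) ∧
        ∀ v w, (H.induce (s : Set (Fin t))).Adj v w → χ s(g v, g w) = 1)).card := by
    rw [colorCopiesIn, ncard_setOf_eq_card_filter]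
  have hM : monoCopies H χ =
      (Finset.univ.filter (fun f : Fin t → Fin n => Function.Injective f ∧
        ∃ col : Fin 2, ∀ v w, H.Adj v w → χ s(f v, f w) = col)).card := by
    rw [monoCopies, ncard_setOf_eq_card_filter]
  set A := Finset.univ.filter (fun g : ((s : Set (Fin t)) : Type) → Fin n =>
        Function.Injective g ∧ (∀ v, g v ∈ S) ∧
        ∀ v w, (H.induce (s : Set (Fin t))).Adj v w → χ s(g v, g w) = 1) with hAdef
  set MF := Finset.univ.filter (fun f : Fin t → Fin n => Function.Injective f ∧
        ∃ col : Fin 2, ∀ v w, H.Adj v w → χ s(f v, f w) = col) with hMdef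
  rw [hA, hM]
  -- restriction map and fibers
  set ρ : (Fin t → Fin n) → (((s : Set (Fin t)) : Type) → Fin n) :=
    fun f x => f ↑x with hρ
  have key : ∀ g ∈ A, c ^ (t - s.card) ≤ (MF.filter (fun f => ρ f = g)).card := by
    intro g hg
    rw [hAdef, Finset.mem_filter] at hg
    obtain ⟨-, hginj, hgS, hgblue⟩ := hg
    -- target sets for pendant vertices
    set T : β → Finset (Fin n) := fun x =>
      (Finset.univ.filter (fun y => y ≠ g ⟨w x, hwmem x⟩ ∧ χ s(g ⟨w x, hwmem x⟩, y) = 1)) \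
        Finset.univ.image g with hT
    have hTcard : ∀ x : β, D - s.card ≤ (T x).card := by
      intro x
      have h1 : (Finset.univ.filter (fun y => y ≠ g ⟨w x, hwmem x⟩ ∧
          χ s(g ⟨w x, hwmem x⟩, y) = 1)).card = colorDeg χ 1 (g ⟨w x, hwmem x⟩) := by
        rw [colorDeg, ncard_setOf_eq_card_filter]
      have h2 : D ≤ colorDeg χ 1 (g ⟨w x, hwmem x⟩) := hdeg _ (hgS _)
      have h3 : (Finset.univ.image g).card ≤ s.card := by
        calc (Finset.univ.image g).card ≤ (Finset.univ : Finset ((s : Set (Fin t)) : Type)).card :=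
              Finset.card_image_le
          _ = s.card := by rw [Finset.card_univ]; exact Fintype.card_coe s
      calc D - s.card ≤ (Finset.univ.filter (fun y => y ≠ g ⟨w x, hwmem x⟩ ∧
            χ s(g ⟨w x, hwmem x⟩, y) = 1)).card - (Finset.univ.image g).card := by omega
        _ ≤ (T x).card := by rw [hT]; exact Finset.le_card_sdiff _ _
    -- extension count
    have hext := ext_card (V := Fin n) (Finset.univ : Finset β) (fun _ => ⟨0, hn⟩) T c
      (fun x _ => by
        have := hTcard x
        rw [hcardβ]
        omega)
    rw [hcardβ] at hext
    refine le_trans hext ?_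
    rw [ncard_setOf_eq_card_filter]
    -- glue injection
    apply Finset.card_le_card_of_injOn
      (fun e v => if hv : v ∈ s then g ⟨v, Finset.mem_coe.mpr hv⟩ else e ⟨v, Finset.mem_compl.mpr hv⟩)
    · -- maps into fiber
      intro e he
      rw [Finset.mem_coe, Finset.mem_filter] at he
      obtain ⟨-, heinj, heT, -⟩ := he
      have heT' : ∀ x : β, e x ∈ T x := fun x => heT x (Finset.mem_univ x)
      have heNotg : ∀ (x : β) (v : ((s : Set (Fin t)) : Type)), e x ≠ g v := by
        intro x v hEq
        have := heT' x
        rw [hT, Finset.mem_sdiff] at this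
        exact this.2 (Finset.mem_image.mpr ⟨v, Finset.mem_univ v, hEq.symm⟩)
      have heBlue : ∀ x : β, χ s(g ⟨w x, hwmem x⟩, e x) = 1 := by
        intro x
        have := heT' x
        rw [hT, Finset.mem_sdiff, Finset.mem_filter] at this
        exact this.1.2.2
      set f : Fin t → Fin n := fun v => if hv : v ∈ s then g ⟨v, Finset.mem_coe.mpr hv⟩
        else e ⟨v, Finset.mem_compl.mpr hv⟩ with hf
      have hfs : ∀ (v : Fin t) (hv : v ∈ s), f v = g ⟨v, Finset.mem_coe.mpr hv⟩ := by
        intro v hv; rw [hf]; simp [hv]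
      have hfc : ∀ (v : Fin t) (hv : v ∉ s), f v = e ⟨v, Finset.mem_compl.mpr hv⟩ := by
        intro v hv; rw [hf]; simp [hv]
      -- pendant adjacency characterization
      have hadj : ∀ (v u : Fin t) (hv : v ∉ s), H.Adj v u →
          u = w ⟨v, Finset.mem_compl.mpr hv⟩ := by
        intro v u hv hvu
        have : u ∈ H.neighborSet v := hvu
        rw [hwnb ⟨v, Finset.mem_compl.mpr hv⟩] at this
        exact this
      show (fun v : Fin t => if hv : v ∈ s then g ⟨v, Finset.mem_coe.mpr hv⟩
        else e ⟨v, Finset.mem_compl.mpr hv⟩) ∈ MF.filter (fun f => ρ f = g)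
      rw [← hf, Finset.mem_filter, hMdef, Finset.mem_filter]
      refine ⟨⟨Finset.mem_univ _, ?_, ⟨1, ?_⟩⟩, ?_⟩
      · -- injective
        intro u v huv
        by_cases hu : u ∈ s <;> by_cases hv : v ∈ s
        · rw [hfs u hu, hfs v hv] at huv
          have := hginj huv
          exact congrArg Subtype.val this
        · rw [hfs u hu, hfc v hv] at huv
          exact absurd huv.symm (heNotg _ _)
        · rw [hfc u hu, hfs v hv] at huv
          exact absurd huv (heNotg _ _)
        · rw [hfc u hu, hfc v hv] at huv
          have := heinj (Finset.mem_coe.mpr (Finset.mem_univ _))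
            (Finset.mem_coe.mpr (Finset.mem_univ _)) huv
          exact congrArg Subtype.val this
      · -- all edges blue
        intro u v huv
        by_cases hu : u ∈ s <;> by_cases hv : v ∈ s
        · rw [hfs u hu, hfs v hv]
          apply hgblue
          simp only [SimpleGraph.comap_adj, Function.Embedding.coe_subtype]
          exact huv
        · -- u ∈ s, v ∉ s : u = w v
          have hu' := hadj v u hv huv.symm
          rw [hfs u hu, hfc v hv]
          have : (⟨u, Finset.mem_coe.mpr hu⟩ : ((s : Set (Fin t)) : Type)) =
              ⟨w ⟨v, Finset.mem_compl.mpr hv⟩, hwmem _⟩ := Subtype.ext hu'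
          rw [this]
          exact heBlue _
        · have hv' := hadj u v hu huv
          rw [hfc u hu, hfs v hv]
          have : (⟨v, Finset.mem_coe.mpr hv⟩ : ((s : Set (Fin t)) : Type)) =
              ⟨w ⟨u, Finset.mem_compl.mpr hu⟩, hwmem _⟩ := Subtype.ext hv'
          rw [this, Sym2.eq_swap]
          exact heBlue _
        · exfalso
          have := hadj u v hu huv
          have : v ∈ s := by rw [this]; exact hwmem _
          exact hv this
      · -- restriction is g
        funext x
        have hx : (↑x : Fin t) ∈ s := Finset.mem_coe.mp x.2
        show f ↑x = g x
        rw [hfs ↑x hx]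
      
    · -- injective on extensions
      intro e he e' he' hEq
      funext x
      have := congrFun hEq ↑x
      have hx : (↑x : Fin t) ∉ s := Finset.mem_compl.mp x.2
      simpa [dif_neg hx] using this
  -- sum over fibers
  calc A.card * c ^ (t - s.card) = ∑ _g ∈ A, c ^ (t - s.card) := by
        rw [Finset.sum_const, smul_eq_mul]
    _ ≤ ∑ g ∈ A, (MF.filter (fun f => ρ f = g)).card := Finset.sum_le_sum key
    _ = (A.biUnion (fun g => MF.filter (fun f => ρ f = g))).card := by
        rw [Finset.card_biUnion]
        intro g hg g' hg' hne
        apply Finset.disjoint_left.mpr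
        intro f hf hf'
        rw [Finset.mem_filter] at hf hf'
        exact hne (hf.2 ▸ hf'.2)
    _ ≤ MF.card := by
        apply Finset.card_le_card
        intro f hf
        rw [Finset.mem_biUnion] at hf
        obtain ⟨g, -, hf⟩ := hf
        exact (Finset.mem_filter.mp hf).1

end Auxiliary

set_option maxHeartbeats 1600000 in
theorem statement7 (k h t : ℕ) (hk : 4 ≤ k)
    (H : SimpleGraph (Fin t)) (s : Finset (Fin t)) (hcard : s.card = h)
    (hcrit : IsKCritical (H.induce (s : Set (Fin t))) k)
    (hpend : PendantOutside H s)
    (ht : (1000 * k * h) ^ 10 * h ^ (10 * k) ≤ t) :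
    ∃ N : ℕ, ∀ n ≥ N, ∀ χ : Sym2 (Fin n) → Fin 2, monoCopies H χ = minMono H n 2 →
      ∀ S : Set (Fin n),
        (∀ v ∈ S, (1 + lamParam h k) * n / ((k : ℝ) - 1) ≤ (colorDeg χ 1 v : ℝ)) →
        (colorCopiesIn (H.induce (s : Set (Fin t))) χ 1 S : ℝ) <
          (1 + lamParam h k) ^ (-(t : ℤ)) * (n.descFactorial h : ℝ) := by
  classical
  obtain ⟨hchrom, e, he_mem, -⟩ := hcrit
  obtain ⟨A0, B0, hadj0⟩ : ∃ a b : ((s : Set (Fin t)) : Type),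
      (H.induce (s : Set (Fin t))).Adj a b := by
    revert he_mem
    induction e using Sym2.ind with
    | _ a b => exact fun hm => ⟨a, b, (SimpleGraph.mem_edgeSet _).mp hm⟩
  set m := k - 1 with hm
  have hm3 : 3 ≤ m := by omega
  have hm0 : 0 < m := by omega
  -- pendant attachment function
  have hattex : ∀ v : Fin t, ∃ w₀ : Fin t, v ∉ s → (w₀ ∈ s ∧ H.neighborSet v = {w₀}) := by
    intro v
    by_cases hv : v ∈ s
    · exact ⟨v, fun hcon => absurd hv hcon⟩
    · obtain ⟨w₀, hw1, hw2⟩ := hpend v hv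
      exact ⟨w₀, fun _ => ⟨hw1, hw2⟩⟩
  choose att hatt using hattex
  have hattmem : ∀ v, v ∉ s → att v ∈ s := fun v hv => (hatt v hv).1
  have hattadj : ∀ v, v ∉ s → H.Adj v (att v) := by
    intro v hv
    have : att v ∈ H.neighborSet v := by rw [(hatt v hv).2]; rfl
    exact this
  -- edge endpoints
  have ha₀ : (A0 : Fin t) ∈ s := A0.2
  have hb₀ : (B0 : Fin t) ∈ s := B0.2
  have hadjH : H.Adj ↑A0 ↑B0 := by simpa using hadj0
  have hab : (A0 : Fin t) ≠ ↑B0 := Subtype.coe_injective.ne hadj0.ne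
  -- numeric facts
  have hh1 : 1 ≤ h := by
    rw [← hcard]; exact Finset.card_pos.mpr ⟨↑A0, ha₀⟩
  have hht : h ≤ t := by rw [← hcard]; simpa using Finset.card_le_univ s
  have ht100 : 100 ≤ t := by
    have h1 : 1000 ≤ 1000 * k * h := by
      calc 1000 = 1000 * 1 * 1 := by norm_num
        _ ≤ 1000 * k * h := Nat.mul_le_mul (Nat.mul_le_mul_left _ (by omega)) hh1
    have h2 : 1000 ^ 10 ≤ (1000 * k * h) ^ 10 := Nat.pow_le_pow_left h1 10
    have h3 : 1 ≤ h ^ (10 * k) := Nat.one_le_pow _ _ (by omega)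
    calc 100 ≤ 1000 ^ 10 := by norm_num
      _ = 1000 ^ 10 * 1 := (mul_one _).symm
      _ ≤ (1000 * k * h) ^ 10 * h ^ (10 * k) := Nat.mul_le_mul h2 h3
      _ ≤ t := ht
  have hhR : (1 : ℝ) ≤ (h : ℝ) := by exact_mod_cast hh1
  have hh0R : (0 : ℝ) < (h : ℝ) := by linarith
  have hk0R : (0 : ℝ) < (k : ℝ) := by
    have : (4 : ℝ) ≤ (k : ℝ) := by exact_mod_cast hk
    linarith
  have hl0 : 0 < lamParam h k := by
    rw [lamParam]
    apply div_pos one_pos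
    apply mul_pos (mul_pos (by norm_num) (pow_pos hh0R 4)) (pow_pos hk0R 4)
  have hl2 : (1 + lamParam h k) ^ h ≤ 2 := by
    set l := lamParam h k with hldef
    have hkR : (4 : ℝ) ≤ (k : ℝ) := by exact_mod_cast hk
    have hhl : (h : ℝ) * l ≤ 1 / 2 := by
      rw [hldef, lamParam, mul_one_div, div_le_div_iff₀ (by positivity) (by norm_num)]
      have e1 : (h : ℝ) ≤ (h : ℝ) ^ 4 := by
        calc (h:ℝ) = (h:ℝ) ^ 1 := (pow_one _).symm
          _ ≤ (h:ℝ) ^ 4 := pow_le_pow_right₀ hhR (by norm_num)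
      have e2 : (1 : ℝ) ≤ (k : ℝ) ^ 4 := one_le_pow₀ (by linarith)
      have e3 : (h : ℝ) * 1 ≤ (h : ℝ) ^ 4 * (k : ℝ) ^ 4 :=
        mul_le_mul e1 e2 zero_le_one (by positivity)
      nlinarith
    have hl_half : l ≤ 1 / 2 := by
      have : l ≤ (h : ℝ) * l := le_mul_of_one_le_left hl0.le hhR
      linarith
    have hb : 1 - (h : ℝ) * l ≤ (1 - l) ^ h := by
      have := one_add_mul_le_pow (a := -l) (by linarith) h
      have he : (1 : ℝ) + (h : ℕ) * (-l) = 1 - (h : ℝ) * l := by push_cast; ring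
      rw [he] at this
      calc 1 - (h:ℝ) * l ≤ (1 + -l) ^ h := this
        _ = (1 - l) ^ h := by ring_nf
    have hpos : (0 : ℝ) < (1 - l) ^ h := by
      apply pow_pos; linarith
    have hprod : (1 + l) ^ h * (1 - l) ^ h ≤ 1 := by
      rw [← mul_pow]
      have e : (1 + l) * (1 - l) = 1 - l ^ 2 := by ring
      rw [e]
      apply pow_le_one₀ (by nlinarith) (by nlinarith)
    have h1 : (1 + l) ^ h ≤ 1 / (1 - l) ^ h := by
      rw [le_div_iff₀ hpos]; exact hprod
    have h2 : 1 / (1 - l) ^ h ≤ 2 := by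
      rw [div_le_iff₀ hpos]
      nlinarith
    linarith
  -- the bound N
  refine ⟨m * t ^ 3 + h * t ^ 2, fun n hn χ hmin S hS => ?_⟩
  by_contra hcon
  rw [not_lt] at hcon
  have hn0 : 0 < n := by
    have h1 : 0 < m * t ^ 3 := Nat.mul_pos hm0 (Nat.pow_pos (by omega))
    exact lt_of_lt_of_le (lt_of_lt_of_le h1 (Nat.le_add_right _ _)) hn
  -- real-number basics
  have hmR : (3 : ℝ) ≤ (m : ℝ) := by exact_mod_cast hm3
  have hm0R : (0 : ℝ) < (m : ℝ) := by linarith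
  have htR : (100 : ℝ) ≤ (t : ℝ) := by exact_mod_cast ht100
  have ht0R : (0 : ℝ) < (t : ℝ) := by linarith
  have hnR : (m : ℝ) * (t : ℝ) ^ 3 + (h : ℝ) * (t : ℝ) ^ 2 ≤ (n : ℝ) := by
    have := (Nat.cast_le (α := ℝ)).mpr hn
    push_cast at this
    linarith
  have hmcast : ((m : ℕ) : ℝ) = (k : ℝ) - 1 := by
    rw [hm, Nat.cast_sub (by omega : 1 ≤ k), Nat.cast_one]
  -- degree threshold
  set D := Nat.ceil ((1 + lamParam h k) * (n : ℝ) / (m : ℝ)) with hDdef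
  have hdeg : ∀ v ∈ S, D ≤ colorDeg χ 1 v := by
    intro v hv
    apply Nat.ceil_le.mpr
    rw [hmcast]
    exact hS v hv
  have hD : (1 + lamParam h k) * (n : ℝ) / (m : ℝ) ≤ (D : ℝ) := Nat.le_ceil _
  have htD : t ≤ D := by
    have hmt1 : (m : ℝ) * (t : ℝ) ≤ (m : ℝ) * (t : ℝ) ^ 3 := by
      nlinarith [mul_nonneg (mul_nonneg hm0R.le ht0R.le)
        (by nlinarith : (0:ℝ) ≤ (t:ℝ) ^ 2 - 1)]
    have hp2 : (0 : ℝ) ≤ (h : ℝ) * (t : ℝ) ^ 2 := by positivity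
    have h1 : (t : ℝ) ≤ (1 + lamParam h k) * (n : ℝ) / (m : ℝ) := by
      rw [le_div_iff₀ hm0R]
      have e : (1 + lamParam h k) * (n : ℝ) = (n : ℝ) + lamParam h k * n := by ring
      have e2 : (0 : ℝ) ≤ lamParam h k * n := mul_nonneg hl0.le (Nat.cast_nonneg n)
      linarith
    have := h1.trans hD
    exact_mod_cast this
  set q := n / m + 1 with hqdef
  -- upper bound chain
  have hup : monoCopies H χ ≤ n ^ (h - 1) * q ^ (t - h + 1) := by
    have h1 : monoCopies H χ ≤ monoCopies H (turanColoring n k) := by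
      rw [hmin, minMono]
      exact ciInf_le (OrderBot.bddBelow _) _
    refine h1.trans ?_
    have hsub : {f : Fin t → Fin n | Function.Injective f ∧
        ∃ col : Fin 2, ∀ v w, H.Adj v w → turanColoring n k s(f v, f w) = col} ⊆
        {f : Fin t → Fin n | ((f ↑B0 : ℕ) % m = (f ↑A0 : ℕ) % m) ∧
          ∀ v, v ∉ s → (f v : ℕ) % m = (f (att v) : ℕ) % m} := by
      rintro f ⟨hinj, col, hcolall⟩
      have hcases : col = 0 ∨ col = 1 := by omega
      rcases hcases with rfl | rfl
      · constructor
        · have h1 := hcolall ↑A0 ↑B0 hadjH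
          rw [tc_eq_zero_iff, ← hm] at h1
          exact h1.symm
        · intro v hv
          have h2 := hcolall v (att v) (hattadj v hv)
          rw [tc_eq_zero_iff, ← hm] at h2
          exact h2
      · exfalso
        have C : (H.induce (s : Set (Fin t))).Coloring (Fin m) :=
          SimpleGraph.Coloring.mk (fun x => ⟨(f ↑x : ℕ) % m, Nat.mod_lt _ hm0⟩) (by
            intro x y hxy heq
            have hadj' : H.Adj ↑x ↑y := by simpa using hxy
            have h1 := hcolall ↑x ↑y hadj'
            rw [tc_eq_one_iff, ← hm] at h1
            exact h1 (congrArg Fin.val heq))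
        have hcolorable : (H.induce (s : Set (Fin t))).Colorable (Fintype.card (Fin m)) :=
          C.colorable
        have hle := hcolorable.chromaticNumber_le
        rw [hchrom, Fintype.card_fin] at hle
        have : k ≤ m := by exact_mod_cast hle
        omega
    calc monoCopies H (turanColoring n k)
        ≤ Set.ncard {f : Fin t → Fin n | ((f ↑B0 : ℕ) % m = (f ↑A0 : ℕ) % m) ∧
            ∀ v, v ∉ s → (f v : ℕ) % m = (f (att v) : ℕ) % m} := by
          rw [monoCopies]
          exact Set.ncard_le_ncard hsub (Set.toFinite _)
      _ ≤ n ^ (h - 1) * q ^ (t - h + 1) :=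
          red_upper m h q hm0 hqdef s hcard ↑A0 ↑B0 ha₀ hb₀ hab att hattmem
  -- lower bound chain
  have hlow : colorCopiesIn (H.induce (s : Set (Fin t))) χ 1 S * (D - t) ^ (t - h) ≤
      monoCopies H χ := by
    have := blue_lower hn0 H s χ S hpend D (D - t)
      hdeg (by rw [hcard]; omega)
    rwa [hcard] at this
  -- analytic contradiction
  have hkey := analytic_ineq (lamParam h k) h t n m D q hm3 hh1 hht ht100 hl0 hl2 hqdef hD hn
  have hc0 : (0 : ℝ) ≤ (((D - t : ℕ) : ℝ)) ^ (t - h) := by positivity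
  have c1 : ((1 + lamParam h k) ^ (-(t : ℤ)) * (n.descFactorial h : ℝ)) *
      (((D - t : ℕ) : ℝ)) ^ (t - h) ≤
      (colorCopiesIn (H.induce (s : Set (Fin t))) χ 1 S : ℝ) * (((D - t : ℕ) : ℝ)) ^ (t - h) :=
    mul_le_mul_of_nonneg_right hcon hc0
  have c2 : (colorCopiesIn (H.induce (s : Set (Fin t))) χ 1 S : ℝ) *
      (((D - t : ℕ) : ℝ)) ^ (t - h) ≤ (monoCopies H χ : ℝ) := by
    exact_mod_cast hlow
  have c3 : (monoCopies H χ : ℝ) ≤ (n : ℝ) ^ (h - 1) * (q : ℝ) ^ (t - h + 1) := by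
    exact_mod_cast hup
  linarith
end
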